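/- arXiv:0906.1829 — 10 statements merged into one kernel-verified Lean document; each statement's English description precedes it below -/
import Mathlib

section
/- Let A be a Hopf algebra over ℂ with comultiplication Δ, counit ε and antipode S satisfying S ∘ S = id, let h : A → ℂ be a two-sided invariant unital functional, i.e. h(1) = 1, (id ⊗ h)(Δ a) = h(a)·1 and (h ⊗ id)(Δ a) = h(a)·1 for all a ∈ A, let H be a complex vector space, and let ρ : H → H ⊗ A be a corepresentation of A on H, i.e. (ρ ⊗ id) ∘ ρ = (id ⊗ Δ) ∘ ρ and (id ⊗ ε) ∘ ρ = id_H. Define ρ† : H ⊗ A → H by ρ†(ξ ⊗ a) = (id ⊗ h)( ((id ⊗ S)(ρ(ξ))) · (1 ⊗ a) ). Then ρ ∘ ρ† = (ρ† ⊗ id_A) ∘ (id_H ⊗ Δ) as linear maps H ⊗ A → H ⊗ A. -/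
open scoped TensorProduct
open TensorProduct LinearMap Coalgebra HopfAlgebra

namespace Stmt5Aux

variable {R A : Type*} [CommSemiring R] [Semiring A] [HopfAlgebra R A]

/-- convolution product on `Hom(A, A ⊗ A)`. -/
noncomputable def conv (f g : A →ₗ[R] A ⊗[R] A) : A →ₗ[R] A ⊗[R] A :=
  LinearMap.mul' R (A ⊗[R] A) ∘ₗ TensorProduct.map f g ∘ₗ Coalgebra.comul

/-- convolution unit. -/
noncomputable def cunit : A →ₗ[R] A ⊗[R] A :=
  Algebra.linearMap R (A ⊗[R] A) ∘ₗ Coalgebra.counit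

lemma conv_cunit_left (f : A →ₗ[R] A ⊗[R] A) : conv cunit f = f := by
  have key : (LinearMap.mul' R (A ⊗[R] A) ∘ₗ TensorProduct.map (cunit (R := R) (A := A)) f)
      = f ∘ₗ (TensorProduct.lid R A).toLinearMap ∘ₗ LinearMap.rTensor A Coalgebra.counit := by
    apply TensorProduct.ext'
    intro x y
    simp [cunit, Algebra.algebraMap_eq_smul_one, TensorProduct.smul_tmul',
      ← Algebra.TensorProduct.one_def, smul_mul_assoc, smul_one_mul]
  ext a
  have := congrArg (fun (g : A ⊗[R] A →ₗ[R] A ⊗[R] A) => g (Coalgebra.comul a)) key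
  simpa [conv, Coalgebra.rTensor_counit_comul] using this

lemma conv_cunit_right (f : A →ₗ[R] A ⊗[R] A) : conv f cunit = f := by
  have key : (LinearMap.mul' R (A ⊗[R] A) ∘ₗ TensorProduct.map f (cunit (R := R) (A := A)))
      = f ∘ₗ (TensorProduct.rid R A).toLinearMap ∘ₗ LinearMap.lTensor A Coalgebra.counit := by
    apply TensorProduct.ext'
    intro x y
    simp [cunit, Algebra.algebraMap_eq_smul_one, TensorProduct.tmul_smul,
      ← Algebra.TensorProduct.one_def, mul_smul_comm, mul_smul_one]
  ext a
  have := congrArg (fun (g : A ⊗[R] A →ₗ[R] A ⊗[R] A) => g (Coalgebra.comul a)) key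
  simpa [conv, Coalgebra.lTensor_counit_comul] using this

lemma conv_assoc (f g k : A →ₗ[R] A ⊗[R] A) :
    conv (conv f g) k = conv f (conv g k) := by
  ext a
  have claim1 : ∀ t : A ⊗[R] A,
      LinearMap.mul' R (A ⊗[R] A) (TensorProduct.map (conv f g) k t) =
      (LinearMap.mul' R (A ⊗[R] A) ∘ₗ
        TensorProduct.map (LinearMap.mul' R (A ⊗[R] A) ∘ₗ TensorProduct.map f g) k)
          (LinearMap.rTensor A Coalgebra.comul t) := by
    intro t
    induction t with
    | zero => simp
    | tmul x y => simp [conv]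
    | add x y hx hy => simp [map_add, hx, hy]
  have claim2 : ∀ t : A ⊗[R] A,
      LinearMap.mul' R (A ⊗[R] A) (TensorProduct.map f (conv g k) t) =
      (LinearMap.mul' R (A ⊗[R] A) ∘ₗ
        TensorProduct.map f (LinearMap.mul' R (A ⊗[R] A) ∘ₗ TensorProduct.map g k))
          (LinearMap.lTensor A Coalgebra.comul t) := by
    intro t
    induction t with
    | zero => simp
    | tmul x y => simp [conv]
    | add x y hx hy => simp [map_add, hx, hy]
  have claim3 : (LinearMap.mul' R (A ⊗[R] A) ∘ₗ
        TensorProduct.map (LinearMap.mul' R (A ⊗[R] A) ∘ₗ TensorProduct.map f g) k)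
      = (LinearMap.mul' R (A ⊗[R] A) ∘ₗ
        TensorProduct.map f (LinearMap.mul' R (A ⊗[R] A) ∘ₗ TensorProduct.map g k)) ∘ₗ
        (TensorProduct.assoc R A A A).toLinearMap := by
    apply TensorProduct.ext_threefold
    intro x y z
    simp [mul_assoc]
  calc conv (conv f g) k a
      = LinearMap.mul' R (A ⊗[R] A)
          (TensorProduct.map (conv f g) k (Coalgebra.comul a)) := by simp [conv]
    _ = (LinearMap.mul' R (A ⊗[R] A) ∘ₗ
          TensorProduct.map f (LinearMap.mul' R (A ⊗[R] A) ∘ₗ TensorProduct.map g k))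
            ((TensorProduct.assoc R A A A)
              (LinearMap.rTensor A Coalgebra.comul (Coalgebra.comul a))) := by
        rw [claim1, claim3]; rfl
    _ = conv f (conv g k) a := by
        rw [Coalgebra.coassoc_apply, ← claim2]; simp [conv]


lemma conv_antipode_left :
    conv (Coalgebra.comul ∘ₗ HopfAlgebra.antipode (R := R) (A := A)) Coalgebra.comul = cunit := by
  ext a
  have claim4 : ∀ t : A ⊗[R] A,
      LinearMap.mul' R (A ⊗[R] A)
        (TensorProduct.map (Coalgebra.comul ∘ₗ HopfAlgebra.antipode (R := R) (A := A))
          Coalgebra.comul t) =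
      Coalgebra.comul (LinearMap.mul' R A (LinearMap.rTensor A (HopfAlgebra.antipode R) t)) := by
    intro t
    induction t with
    | zero => simp
    | tmul x y => simp [← Bialgebra.comul_mul]
    | add x y hx hy => simp [map_add, hx, hy]
  have : conv (Coalgebra.comul ∘ₗ HopfAlgebra.antipode (R := R) (A := A)) Coalgebra.comul a
      = Coalgebra.comul (LinearMap.mul' R A
          (LinearMap.rTensor A (HopfAlgebra.antipode R) (Coalgebra.comul a))) := by
    simpa [conv] using claim4 (Coalgebra.comul a)
  rw [this, HopfAlgebra.mul_antipode_rTensor_comul_apply]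
  simp [cunit, Algebra.algebraMap_eq_smul_one]

/-- the candidate inverse `τ ∘ (S ⊗ S) ∘ Δ`. -/
noncomputable def cand : A →ₗ[R] A ⊗[R] A :=
  (TensorProduct.comm R A A).toLinearMap ∘ₗ
    TensorProduct.map (HopfAlgebra.antipode R) (HopfAlgebra.antipode R) ∘ₗ Coalgebra.comul

noncomputable def Wmap : A ⊗[R] A →ₗ[R] A ⊗[R] A :=
  LinearMap.lTensor A (LinearMap.mul' R A ∘ₗ LinearMap.lTensor A (HopfAlgebra.antipode R)) ∘ₗ
    (TensorProduct.assoc R A A A).toLinearMap ∘ₗ LinearMap.rTensor A Coalgebra.comul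

noncomputable def mkS : A →ₗ[R] A ⊗[R] A :=
  ((TensorProduct.mk R A A).flip 1) ∘ₗ HopfAlgebra.antipode R

lemma Gpt (e : A ⊗[R] A) (q y : A) :
    e * (HopfAlgebra.antipode (R := R) y ⊗ₜ[R] HopfAlgebra.antipode (R := R) q) =
      (LinearMap.lTensor A (LinearMap.mul' R A ∘ₗ LinearMap.lTensor A (HopfAlgebra.antipode R))
        ((TensorProduct.assoc R A A A) (e ⊗ₜ[R] q))) *
        (HopfAlgebra.antipode (R := R) y ⊗ₜ[R] (1 : A)) := by
  induction e with
  | zero => simp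
  | tmul e1 e2 => simp [Algebra.TensorProduct.tmul_mul_tmul]
  | add x y hx hy =>
      rw [add_tmul, map_add, map_add, add_mul, add_mul, hx, hy]

lemma Lambda_eq (x : A) : Wmap (Coalgebra.comul x) = x ⊗ₜ[R] (1 : A) := by
  rw [Wmap]
  simp only [LinearMap.comp_apply, LinearEquiv.coe_coe]
  rw [Coalgebra.coassoc_apply, ← LinearMap.lTensor_comp_apply]
  have : ((LinearMap.mul' R A ∘ₗ LinearMap.lTensor A (HopfAlgebra.antipode R)) ∘ₗ
      Coalgebra.comul : A →ₗ[R] A) = Algebra.linearMap R A ∘ₗ Coalgebra.counit := by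
    rw [LinearMap.comp_assoc]; exact HopfAlgebra.mul_antipode_lTensor_comul
  rw [this, LinearMap.lTensor_comp, LinearMap.comp_apply]
  simp

lemma claimG :
    (LinearMap.mul' R (A ⊗[R] A) ∘ₗ TensorProduct.map Coalgebra.comul
        ((TensorProduct.comm R A A).toLinearMap ∘ₗ
          TensorProduct.map (HopfAlgebra.antipode R) (HopfAlgebra.antipode R)) ∘ₗ
      (TensorProduct.assoc R A A A).toLinearMap : (A ⊗[R] A) ⊗[R] A →ₗ[R] A ⊗[R] A)
    = LinearMap.mul' R (A ⊗[R] A) ∘ₗ TensorProduct.map Wmap mkS := by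
  apply TensorProduct.ext_threefold
  intro p q y
  simp only [LinearMap.comp_apply, LinearEquiv.coe_coe, TensorProduct.assoc_tmul,
    TensorProduct.map_tmul, TensorProduct.comm_tmul, LinearMap.mul'_apply, Wmap, mkS,
    TensorProduct.mk_apply, LinearMap.flip_apply, LinearMap.rTensor_tmul]
  exact Gpt (Coalgebra.comul p) q y

lemma conv_antipode_right : conv Coalgebra.comul (cand (R := R) (A := A)) = cunit := by
  ext a
  set C : A ⊗[R] A →ₗ[R] A ⊗[R] A := (TensorProduct.comm R A A).toLinearMap ∘ₗ
    TensorProduct.map (HopfAlgebra.antipode R) (HopfAlgebra.antipode R) with hC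
  have step1 : TensorProduct.map (Coalgebra.comul (R := R) (A := A)) (cand (R := R) (A := A))
      = TensorProduct.map Coalgebra.comul C ∘ₗ LinearMap.lTensor A Coalgebra.comul := by
    apply TensorProduct.ext'; intro x y; simp [cand, hC]
  have step3 : TensorProduct.map (Wmap (R := R) (A := A)) mkS ∘ₗ
      LinearMap.rTensor A Coalgebra.comul = TensorProduct.map (Wmap ∘ₗ Coalgebra.comul) mkS := by
    apply TensorProduct.ext'; intro x y; simp
  have step4 : (Wmap ∘ₗ Coalgebra.comul : A →ₗ[R] A ⊗[R] A)
      = (TensorProduct.mk R A A).flip 1 := by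
    ext x; simpa using Lambda_eq x
  have claimF : (LinearMap.mul' R (A ⊗[R] A) ∘ₗ
      TensorProduct.map ((TensorProduct.mk R A A).flip 1) (mkS (R := R) (A := A)))
      = ((TensorProduct.mk R A A).flip 1) ∘ₗ LinearMap.mul' R A ∘ₗ
          LinearMap.lTensor A (HopfAlgebra.antipode R) := by
    apply TensorProduct.ext'; intro x y
    simp [mkS, Algebra.TensorProduct.tmul_mul_tmul]
  calc conv Coalgebra.comul (cand (R := R) (A := A)) a
      = LinearMap.mul' R (A ⊗[R] A) (TensorProduct.map Coalgebra.comul C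
          ((TensorProduct.assoc R A A A)
            (LinearMap.rTensor A Coalgebra.comul (Coalgebra.comul a)))) := by
        simp only [conv, LinearMap.comp_apply, step1, Coalgebra.coassoc_apply]
    _ = LinearMap.mul' R (A ⊗[R] A) (TensorProduct.map Wmap mkS
          (LinearMap.rTensor A Coalgebra.comul (Coalgebra.comul a))) := by
        have := congrArg (fun (g : (A ⊗[R] A) ⊗[R] A →ₗ[R] A ⊗[R] A) =>
          g (LinearMap.rTensor A Coalgebra.comul (Coalgebra.comul a))) claimG
        simpa [hC] using this
    _ = LinearMap.mul' R (A ⊗[R] A) (TensorProduct.map ((TensorProduct.mk R A A).flip 1) mkS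
          (Coalgebra.comul a)) := by
        rw [← LinearMap.comp_apply (TensorProduct.map Wmap mkS), step3, step4]
    _ = ((TensorProduct.mk R A A).flip 1)
          (LinearMap.mul' R A (LinearMap.lTensor A (HopfAlgebra.antipode R)
            (Coalgebra.comul a))) := by
        have := congrArg (fun (g : A ⊗[R] A →ₗ[R] A ⊗[R] A) => g (Coalgebra.comul a)) claimF
        simpa using this
    _ = cunit a := by
        rw [HopfAlgebra.mul_antipode_lTensor_comul_apply]
        simp [cunit, Algebra.TensorProduct.algebraMap_apply]

/-- The antipode is an anti-coalgebra map. -/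
theorem comul_antipode (b : A) :
    Coalgebra.comul (HopfAlgebra.antipode (R := R) b) =
      (TensorProduct.comm R A A)
        (TensorProduct.map (HopfAlgebra.antipode R) (HopfAlgebra.antipode R)
          (Coalgebra.comul b)) := by
  have main : (Coalgebra.comul ∘ₗ HopfAlgebra.antipode (R := R) (A := A)) = cand := by
    calc Coalgebra.comul ∘ₗ HopfAlgebra.antipode (R := R) (A := A)
        = conv (Coalgebra.comul ∘ₗ HopfAlgebra.antipode (R := R) (A := A)) cunit :=
          (conv_cunit_right _).symm
      _ = conv (Coalgebra.comul ∘ₗ HopfAlgebra.antipode (R := R) (A := A))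
            (conv Coalgebra.comul cand) := by rw [conv_antipode_right]
      _ = conv (conv (Coalgebra.comul ∘ₗ HopfAlgebra.antipode (R := R) (A := A))
            Coalgebra.comul) cand := (conv_assoc _ _ _).symm
      _ = conv cunit cand := by rw [conv_antipode_left]
      _ = cand := conv_cunit_left _
  simpa [cand] using congrArg (fun g : A →ₗ[R] A ⊗[R] A => g b) main


section Invariance

variable (h : A →ₗ[R] R)

/-- `F h a : x ↦ h (S x * a)`. -/
noncomputable def Fmap (a : A) : A →ₗ[R] R :=
  h ∘ₗ LinearMap.mulRight R a ∘ₗ HopfAlgebra.antipode R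

/-- `Nmap' h e : b ↦ (h ⊗ id)((S b ⊗ 1) * e)`. -/
noncomputable def Nmap' (e : A ⊗[R] A) : A →ₗ[R] A :=
  (TensorProduct.lid R A).toLinearMap ∘ₗ LinearMap.rTensor A h ∘ₗ
    LinearMap.mulRight R e ∘ₗ ((TensorProduct.mk R A A).flip 1) ∘ₗ HopfAlgebra.antipode R

lemma Nmap'_apply (e : A ⊗[R] A) (b : A) :
    Nmap' h e b = (TensorProduct.lid R A)
      (LinearMap.rTensor A h ((HopfAlgebra.antipode (R := R) b ⊗ₜ[R] (1 : A)) * e)) := by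
  simp [Nmap']

lemma Nmap'_zero : Nmap' h (0 : A ⊗[R] A) = 0 := by
  ext b; simp [Nmap'_apply]

lemma Nmap'_add (e₁ e₂ : A ⊗[R] A) : Nmap' h (e₁ + e₂) = Nmap' h e₁ + Nmap' h e₂ := by
  ext b; simp [Nmap'_apply, mul_add]

lemma lid_rTensor_mul (u v : A) (e : A ⊗[R] A) :
    (TensorProduct.lid R A) (LinearMap.rTensor A h ((u ⊗ₜ[R] v) * e)) =
      v * (TensorProduct.lid R A) (LinearMap.rTensor A h ((u ⊗ₜ[R] (1 : A)) * e)) := by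
  induction e with
  | zero => simp
  | tmul p q => simp [Algebra.TensorProduct.tmul_mul_tmul, mul_smul_comm]
  | add x y hx hy => rw [mul_add, map_add, map_add, mul_add, map_add, map_add, hx, hy, mul_add]

/-- Strong invariance consequence: `b₁ h(S(b₂) a) = h(S(b) a₁) a₂`. -/
theorem star_lemma
    (hinvL : ∀ c : A,
      (TensorProduct.lid R A) ((LinearMap.rTensor A h) (Coalgebra.comul (R := R) c)) =
        h c • (1 : A))
    (a b : A) :
    (TensorProduct.rid R A) (LinearMap.lTensor A (Fmap h a) (Coalgebra.comul b)) =
      Nmap' h (Coalgebra.comul a) b := by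
  classical
  set S : A →ₗ[R] A := HopfAlgebra.antipode (R := R) with hS
  set C : A ⊗[R] A →ₗ[R] A ⊗[R] A := (TensorProduct.comm R A A).toLinearMap ∘ₗ
    TensorProduct.map S S with hC
  set G : A →ₗ[R] A := (TensorProduct.lid R A).toLinearMap ∘ₗ LinearMap.rTensor A h ∘ₗ
    Coalgebra.comul ∘ₗ LinearMap.mulRight R a ∘ₗ S with hG
  set P : A ⊗[R] A →ₗ[R] A := (TensorProduct.lid R A).toLinearMap ∘ₗ LinearMap.rTensor A h ∘ₗ
    LinearMap.mulRight R (Coalgebra.comul a) ∘ₗ C with hP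
  set N : A →ₗ[R] A := Nmap' h (Coalgebra.comul a) with hN
  have hGpt : ∀ x : A, G x = (Fmap h a) x • 1 := by
    intro x
    simpa [hG, Fmap] using hinvL (S x * a)
  -- step 1: LHS = mul' (lTensor G (Δ b))
  have step1 : ∀ t : A ⊗[R] A,
      (TensorProduct.rid R A) (LinearMap.lTensor A (Fmap h a) t) =
        LinearMap.mul' R A (LinearMap.lTensor A G t) := by
    intro t
    induction t with
    | zero => simp
    | tmul x y => simp [hGpt, mul_smul_comm]
    | add x y hx hy => simp [map_add, hx, hy]
  -- step 2: G = P ∘ Δ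
  have step2 : ∀ x : A, G x = P (Coalgebra.comul x) := by
    intro x
    have : Coalgebra.comul (S x * a) = C (Coalgebra.comul x) * Coalgebra.comul a := by
      rw [Bialgebra.comul_mul, hS, comul_antipode, hC]
      simp [hS]
    simp [hG, hP, this]
  -- step 3: H1' : P (y ⊗ z) = S y * N z
  have step3 : ∀ y z : A, P (y ⊗ₜ[R] z) = S y * N z := by
    intro y z
    have : C (y ⊗ₜ[R] z) = S z ⊗ₜ[R] S y := by simp [hC]
    rw [hP]
    simp only [LinearMap.comp_apply, this, LinearMap.mulRight_apply, LinearEquiv.coe_coe]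
    rw [hN, Nmap'_apply, lid_rTensor_mul]
  -- step 4: mul' (lTensor P (assoc t)) = mul' (lTensor N (rTensor (mul' ∘ lTensor S) t))
  have step4 : ∀ t : (A ⊗[R] A) ⊗[R] A,
      LinearMap.mul' R A (LinearMap.lTensor A P ((TensorProduct.assoc R A A A) t)) =
        LinearMap.mul' R A (LinearMap.lTensor A N
          (LinearMap.rTensor A (LinearMap.mul' R A ∘ₗ LinearMap.lTensor A S) t)) := by
    intro t
    induction t with
    | zero => simp
    | add x y hx hy => simp [map_add, hx, hy]
    | tmul e z =>
        induction e with
        | zero => simp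
        | add x y hx hy => simp only [add_tmul, map_add, hx, hy]
        | tmul x y =>
            simp only [TensorProduct.assoc_tmul, LinearMap.lTensor_tmul,
              LinearMap.rTensor_tmul, LinearMap.mul'_apply, LinearMap.comp_apply]
            rw [step3, ← mul_assoc]
  -- assemble
  have key :
      LinearMap.mul' R A (LinearMap.lTensor A (P ∘ₗ Coalgebra.comul) (Coalgebra.comul b)) =
        LinearMap.mul' R A (LinearMap.lTensor A N
          (LinearMap.rTensor A ((LinearMap.mul' R A ∘ₗ LinearMap.lTensor A S) ∘ₗ
            Coalgebra.comul) (Coalgebra.comul b))) := by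
    rw [LinearMap.lTensor_comp, LinearMap.rTensor_comp]
    simp only [LinearMap.comp_apply]
    rw [← Coalgebra.coassoc_apply, step4]
  have anti_ax : ((LinearMap.mul' R A ∘ₗ LinearMap.lTensor A S) ∘ₗ Coalgebra.comul : A →ₗ[R] A)
      = Algebra.linearMap R A ∘ₗ Coalgebra.counit := by
    rw [LinearMap.comp_assoc, hS]; exact HopfAlgebra.mul_antipode_lTensor_comul
  calc (TensorProduct.rid R A) (LinearMap.lTensor A (Fmap h a) (Coalgebra.comul b))
      = LinearMap.mul' R A (LinearMap.lTensor A G (Coalgebra.comul b)) := step1 _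
    _ = LinearMap.mul' R A (LinearMap.lTensor A (P ∘ₗ Coalgebra.comul) (Coalgebra.comul b)) := by
        have : G = P ∘ₗ Coalgebra.comul := by ext x; exact step2 x
        rw [← this]
    _ = LinearMap.mul' R A (LinearMap.lTensor A N
          (LinearMap.rTensor A ((LinearMap.mul' R A ∘ₗ LinearMap.lTensor A S) ∘ₗ
            Coalgebra.comul) (Coalgebra.comul b))) := key
    _ = N b := by
        rw [anti_ax, LinearMap.rTensor_comp, LinearMap.comp_apply,
          Coalgebra.rTensor_counit_comul]
        simp

end Invariance

end Stmt5Aux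

open Stmt5Aux in
/-- For a corepresentation `ρ : H → H ⊗ A` of a Hopf algebra `A` with
involutive antipode (`S ∘ S = id`) and a two-sided invariant unital functional `h`, the adjoint
`ρ†(ξ ⊗ a) = (id ⊗ h)(((id ⊗ S)(ρ ξ)) · (1 ⊗ a))` satisfies
`ρ ∘ ρ† = (ρ† ⊗ id) ∘ (id ⊗ Δ)` on `H ⊗ A`. -/
theorem stmt5
    (A : Type*) [Semiring A] [HopfAlgebra ℂ A]
    (hKac : ∀ a : A, HopfAlgebra.antipode (R := ℂ) (HopfAlgebra.antipode (R := ℂ) a) = a)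
    (h : A →ₗ[ℂ] ℂ) (hh1 : h 1 = 1)
    -- right invariance: `(id ⊗ h)(Δ a) = h(a) · 1`
    (hinvR : ∀ a : A,
      (TensorProduct.rid ℂ A) ((LinearMap.lTensor A h) (Coalgebra.comul (R := ℂ) a)) =
        h a • (1 : A))
    -- left invariance: `(h ⊗ id)(Δ a) = h(a) · 1`
    (hinvL : ∀ a : A,
      (TensorProduct.lid ℂ A) ((LinearMap.rTensor A h) (Coalgebra.comul (R := ℂ) a)) =
        h a • (1 : A))
    (H : Type*) [AddCommGroup H] [Module ℂ H]
    (ρ : H →ₗ[ℂ] H ⊗[ℂ] A)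
    -- coassociativity: `(ρ ⊗ id) ∘ ρ = (id ⊗ Δ) ∘ ρ` after reassociation
    (hcoassoc : ∀ ξ : H,
      (TensorProduct.assoc ℂ H A A) ((LinearMap.rTensor A ρ) (ρ ξ)) =
        (LinearMap.lTensor H (Coalgebra.comul (R := ℂ))) (ρ ξ))
    -- counit axiom: `(id ⊗ ε) ∘ ρ = id`
    (hcounit : ∀ ξ : H,
      (TensorProduct.rid ℂ H) ((LinearMap.lTensor H (Coalgebra.counit (R := ℂ))) (ρ ξ)) = ξ)
    (ρdag : H ⊗[ℂ] A →ₗ[ℂ] H)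
    -- `ρ†(ξ ⊗ a) = (id ⊗ h)(((id ⊗ S)(ρ ξ)) · (1 ⊗ a))`
    (hρdag : ∀ (ξ : H) (a : A),
      ρdag (ξ ⊗ₜ[ℂ] a) =
        (TensorProduct.rid ℂ H) ((LinearMap.lTensor H h)
          ((LinearMap.lTensor H (LinearMap.mulRight ℂ a))
            ((LinearMap.lTensor H (HopfAlgebra.antipode (R := ℂ))) (ρ ξ))))) :
    ∀ w : H ⊗[ℂ] A,
      ρ (ρdag w) =
        (LinearMap.rTensor A ρdag)
          ((TensorProduct.assoc ℂ H A A).symm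
            ((LinearMap.lTensor H (Coalgebra.comul (R := ℂ))) w)) := by
  have ρdag_eq : ∀ (ξ : H) (a : A), ρdag (ξ ⊗ₜ[ℂ] a) =
      (TensorProduct.rid ℂ H) (LinearMap.lTensor H (Fmap h a) (ρ ξ)) := by
    intro ξ a
    rw [hρdag]
    congr 1
    simp only [Fmap, LinearMap.lTensor_comp, LinearMap.comp_apply]
  have P1 : ∀ (f : A →ₗ[ℂ] ℂ) (u : H ⊗[ℂ] A),
      ρ ((TensorProduct.rid ℂ H) (LinearMap.lTensor H f u)) =
        (TensorProduct.rid ℂ (H ⊗[ℂ] A))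
          (LinearMap.lTensor (H ⊗[ℂ] A) f (LinearMap.rTensor A ρ u)) := by
    intro f u
    induction u with
    | zero => simp
    | tmul η b => simp [TensorProduct.rid_tmul, map_smul]
    | add x y hx hy => simp [map_add, hx, hy]
  have P2a : ∀ (f : A →ₗ[ℂ] ℂ) (η : H) (e : A ⊗[ℂ] A),
      (TensorProduct.rid ℂ (H ⊗[ℂ] A)) (LinearMap.lTensor (H ⊗[ℂ] A) f
          ((TensorProduct.assoc ℂ H A A).symm (η ⊗ₜ[ℂ] e))) =
        η ⊗ₜ[ℂ] (TensorProduct.rid ℂ A) (LinearMap.lTensor A f e) := by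
    intro f η e
    induction e with
    | zero => simp
    | tmul b₁ b₂ =>
        simp [TensorProduct.assoc_symm_tmul, TensorProduct.rid_tmul,
          TensorProduct.smul_tmul']
    | add x y hx hy => simp [map_add, TensorProduct.tmul_add, hx, hy]
  have P4 : ∀ (p q : A) (v : H ⊗[ℂ] A),
      ((TensorProduct.rid ℂ H) (LinearMap.lTensor H (Fmap h p) v)) ⊗ₜ[ℂ] q =
        LinearMap.lTensor H (Nmap' h (p ⊗ₜ[ℂ] q)) v := by
    intro p q v
    induction v with
    | zero => simp
    | tmul η b =>
        have hNb : Nmap' h (p ⊗ₜ[ℂ] q) b = (Fmap h p) b • q := by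
          rw [Nmap'_apply]
          simp [Fmap, Algebra.TensorProduct.tmul_mul_tmul]
        simp [hNb, TensorProduct.rid_tmul, TensorProduct.smul_tmul']
    | add x y hx hy => simp [map_add, TensorProduct.add_tmul, hx, hy]
  have P3 : ∀ (ξ : H) (e : A ⊗[ℂ] A),
      LinearMap.rTensor A ρdag ((TensorProduct.assoc ℂ H A A).symm (ξ ⊗ₜ[ℂ] e)) =
        LinearMap.lTensor H (Nmap' h e) (ρ ξ) := by
    intro ξ e
    induction e with
    | zero => simp [Nmap'_zero]
    | tmul p q =>
        rw [TensorProduct.assoc_symm_tmul, LinearMap.rTensor_tmul, ρdag_eq, P4]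
    | add x y hx hy =>
        rw [TensorProduct.tmul_add, map_add, map_add, hx, hy, Nmap'_add,
          LinearMap.lTensor_add, LinearMap.add_apply]
  have Pmain : ∀ (a : A) (v : H ⊗[ℂ] A),
      (TensorProduct.rid ℂ (H ⊗[ℂ] A)) (LinearMap.lTensor (H ⊗[ℂ] A) (Fmap h a)
          ((TensorProduct.assoc ℂ H A A).symm
            (LinearMap.lTensor H (Coalgebra.comul (R := ℂ)) v))) =
        LinearMap.lTensor H (Nmap' h (Coalgebra.comul a)) v := by
    intro a v
    induction v with
    | zero => simp
    | tmul η b =>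
        rw [LinearMap.lTensor_tmul, P2a, star_lemma h hinvL a b, LinearMap.lTensor_tmul]
    | add x y hx hy => simp only [map_add, hx, hy]
  intro w
  induction w with
  | zero => simp
  | tmul ξ a =>
      rw [LinearMap.lTensor_tmul, P3 ξ (Coalgebra.comul a), ρdag_eq, P1 (Fmap h a) (ρ ξ)]
      have hco : LinearMap.rTensor A ρ (ρ ξ) =
          (TensorProduct.assoc ℂ H A A).symm
            (LinearMap.lTensor H (Coalgebra.comul (R := ℂ)) (ρ ξ)) := by
        rw [← hcoassoc ξ, LinearEquiv.symm_apply_apply]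
      rw [hco, Pmain]
  | add x y hx hy => simp only [map_add, hx, hy]
end

section
/- Let A be a coalgebra over a field k with coassociative comultiplication Δ, let B be a k-vector space with a distinguished element 1_B, and let Π : A → B be a k-linear map. Define A^Π = { a ∈ A : (Π ⊗ id_A)(Δ a) = 1_B ⊗ a }. Then A^Π is a right coideal of A: for every a ∈ A^Π one has ((Π ⊗ id_A ⊗ id_A)((Δ ⊗ id_A)(Δ a))) = 1_B ⊗ Δ a, and consequently Δ a lies in the subspace A^Π ⊗ A of A ⊗ A. -/
open scoped TensorProduct

lemma assoc_symm_rTensor_aux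
    (k A B : Type*) [Field k]
    [AddCommGroup A] [Module k A]
    [AddCommGroup B] [Module k B]
    (Φ : A →ₗ[k] B) (x : A ⊗[k] (A ⊗[k] A)) :
    (LinearMap.rTensor A (LinearMap.rTensor A Φ))
        ((TensorProduct.assoc k A A A).symm x) =
      (TensorProduct.assoc k B A A).symm (LinearMap.rTensor (A ⊗[k] A) Φ x) := by
  induction x with
  | zero => simp
  | add x y hx hy => simp [map_add, hx, hy]
  | tmul a y =>
    induction y with
    | zero => simp
    | add u v hu hv =>
      simp only [TensorProduct.tmul_add, map_add] at *
      rw [hu, hv]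
    | tmul b c => simp

/-- For a coalgebra `A` over a field `k`, a vector space `B` with a
distinguished element `1_B`, and a linear map `Φ : A → B`, the quantum homogeneous space
`A^Φ = { a : (Φ ⊗ id)(Δ a) = 1_B ⊗ a }` is a right coideal: for `a ∈ A^Φ` one has
`(Φ ⊗ id ⊗ id)((Δ ⊗ id)(Δ a)) = 1_B ⊗ Δ a`, and consequently `Δ a` lies in the subspace
`A^Φ ⊗ A` of `A ⊗ A`. -/
theorem stmt8
    (k A B : Type*) [Field k]
    [AddCommGroup A] [Module k A] [Coalgebra k A]
    [AddCommGroup B] [Module k B] (oneB : B)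
    (Φ : A →ₗ[k] B) :
    ∀ a ∈ {a : A | (LinearMap.rTensor A Φ) (Coalgebra.comul (R := k) a) = oneB ⊗ₜ[k] a},
      (LinearMap.rTensor A (LinearMap.rTensor A Φ))
          ((LinearMap.rTensor A (Coalgebra.comul (R := k)))
            (Coalgebra.comul (R := k) a)) =
        (TensorProduct.assoc k B A A).symm (oneB ⊗ₜ[k] Coalgebra.comul (R := k) a) ∧
      Coalgebra.comul (R := k) a ∈
        Submodule.span k {z : A ⊗[k] A |
          ∃ x ∈ {a : A |
              (LinearMap.rTensor A Φ) (Coalgebra.comul (R := k) a) = oneB ⊗ₜ[k] a},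
            ∃ y : A, z = x ⊗ₜ[k] y} := by
  intro a ha
  simp only [Set.mem_setOf_eq] at ha
  -- Part 1
  have key : (LinearMap.rTensor A (LinearMap.rTensor A Φ))
      ((LinearMap.rTensor A (Coalgebra.comul (R := k))) (Coalgebra.comul (R := k) a)) =
      (TensorProduct.assoc k B A A).symm (oneB ⊗ₜ[k] Coalgebra.comul (R := k) a) := by
    rw [← Coalgebra.coassoc_symm_apply (R := k) a,
      assoc_symm_rTensor_aux k A B Φ]
    congr 1
    have : (LinearMap.rTensor (A ⊗[k] A) Φ) ∘ₗ
        (LinearMap.lTensor A (Coalgebra.comul (R := k))) =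
        (LinearMap.lTensor B (Coalgebra.comul (R := k))) ∘ₗ (LinearMap.rTensor A Φ) := by
      rw [LinearMap.rTensor_comp_lTensor, LinearMap.lTensor_comp_rTensor]
    have h2 := LinearMap.congr_fun this (Coalgebra.comul (R := k) a)
    simp only [LinearMap.comp_apply] at h2
    rw [h2, ha, LinearMap.lTensor_tmul]
  refine ⟨key, ?_⟩
  -- Part 2
  set T : A →ₗ[k] B ⊗[k] A :=
    (LinearMap.rTensor A Φ) ∘ₗ (Coalgebra.comul (R := k)) -
      TensorProduct.mk k B A oneB with hT
  have hset : {a : A | (LinearMap.rTensor A Φ) (Coalgebra.comul (R := k) a) = oneB ⊗ₜ[k] a}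
      = (LinearMap.ker T : Set A) := by
    ext x
    simp [hT, sub_eq_zero]
  have hexact : Function.Exact ((LinearMap.ker T).subtype.rTensor A) (T.rTensor A) :=
    Module.Flat.rTensor_exact A T.exact_subtype_ker_map
  have hmem : (T.rTensor A) (Coalgebra.comul (R := k) a) = 0 := by
    rw [hT]
    simp only [LinearMap.rTensor_sub, LinearMap.sub_apply, sub_eq_zero,
      LinearMap.rTensor_comp, LinearMap.comp_apply]
    rw [key]
    -- RHS: rTensor of mk oneB applied to comul a
    have : ∀ y : A ⊗[k] A, (LinearMap.rTensor A (TensorProduct.mk k B A oneB)) y =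
        (TensorProduct.assoc k B A A).symm (oneB ⊗ₜ[k] y) := by
      intro y
      induction y with
      | zero => simp
      | add u v hu hv => simp [TensorProduct.tmul_add, hu, hv]
      | tmul b c => simp
    rw [this]
  obtain ⟨w, hw⟩ := (hexact (Coalgebra.comul (R := k) a)).mp hmem
  rw [← hw]
  rw [hset]; clear hw
  induction w with
  | zero => simp
  | add u v hu hv => rw [map_add]; exact Submodule.add_mem _ hu hv
  | tmul x y =>
    apply Submodule.subset_span
    exact ⟨x, x.2, y, by simp⟩
end

section
/- Let A be a Hopf ∗-algebra over ℂ: a Hopf algebra (comultiplication Δ, counit ε, antipode S) equipped with a star-ring and star-module structure over ℂ such that Δ(a★) = (★ ⊗ ★)(Δ a) and ε(a★) = conj(ε(a)) for all a, and assume the Kac condition S ∘ S = id. Let φ : A → ℂ be a linear functional with φ(1) = 1 and φ(a★ · a) ≥ 0 for all a ∈ A (a state). Then φ ∘ S is again a state: (φ ∘ S)(1) = 1 and (φ ∘ S)(a★ · a) ≥ 0 for all a ∈ A. -/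
open scoped TensorProduct ComplexOrder

noncomputable section StateAntipodeAux

open TensorProduct LinearMap Coalgebra

variable {R : Type*} [CommSemiring R]

section Conv

variable {C B : Type*} [AddCommMonoid C] [Module R C] [CoalgebraStruct R C]
  [Semiring B] [Algebra R B]

def myconv (f g : C →ₗ[R] B) : C →ₗ[R] B :=
  LinearMap.mul' R B ∘ₗ TensorProduct.map f g ∘ₗ CoalgebraStruct.comul

def myunit : C →ₗ[R] B := Algebra.linearMap R B ∘ₗ CoalgebraStruct.counit

lemma myconv_apply (f g : C →ₗ[R] B) (a : C) :
    myconv f g a =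
      LinearMap.mul' R B (TensorProduct.map f g (CoalgebraStruct.comul a)) := rfl

lemma myconv_unit_right
    (hl : (CoalgebraStruct.counit (R := R) (A := C)).lTensor C ∘ₗ CoalgebraStruct.comul
      = (TensorProduct.mk R C R).flip 1)
    (f : C →ₗ[R] B) : myconv f myunit = f := by
  ext a
  have e : (CoalgebraStruct.counit (R := R) (A := C)).lTensor C (CoalgebraStruct.comul a)
      = a ⊗ₜ[R] 1 := LinearMap.congr_fun hl a
  have hmap : TensorProduct.map f (Algebra.linearMap R B ∘ₗ CoalgebraStruct.counit) =
      TensorProduct.map f (Algebra.linearMap R B)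
        ∘ₗ (CoalgebraStruct.counit (R := R) (A := C)).lTensor C := by
    rw [LinearMap.lTensor, ← TensorProduct.map_comp]
    simp
  rw [myconv_apply, myunit, hmap]
  simp only [LinearMap.comp_apply]
  rw [e]
  simp

lemma myconv_unit_left
    (hr : (CoalgebraStruct.counit (R := R) (A := C)).rTensor C ∘ₗ CoalgebraStruct.comul
      = TensorProduct.mk R R C 1)
    (f : C →ₗ[R] B) : myconv myunit f = f := by
  ext a
  have e : (CoalgebraStruct.counit (R := R) (A := C)).rTensor C (CoalgebraStruct.comul a)
      = (1 : R) ⊗ₜ[R] a := LinearMap.congr_fun hr a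
  have hmap : TensorProduct.map (Algebra.linearMap R B ∘ₗ CoalgebraStruct.counit) f =
      TensorProduct.map (Algebra.linearMap R B) f
        ∘ₗ (CoalgebraStruct.counit (R := R) (A := C)).rTensor C := by
    rw [LinearMap.rTensor, ← TensorProduct.map_comp]
    simp
  rw [myconv_apply, myunit, hmap]
  simp only [LinearMap.comp_apply]
  rw [e]
  simp [Algebra.algebraMap_eq_smul_one]

lemma myconv_assoc
    (hco : (TensorProduct.assoc R C C C).toLinearMap ∘ₗ
        (CoalgebraStruct.comul (R := R) (A := C)).rTensor C ∘ₗ CoalgebraStruct.comul =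
      (CoalgebraStruct.comul (R := R) (A := C)).lTensor C ∘ₗ CoalgebraStruct.comul)
    (f g h : C →ₗ[R] B) :
    myconv (myconv f g) h = myconv f (myconv g h) := by
  have h1 : TensorProduct.map (myconv f g) h =
      TensorProduct.map (LinearMap.mul' R B) LinearMap.id
        ∘ₗ TensorProduct.map (TensorProduct.map f g) h
        ∘ₗ TensorProduct.map CoalgebraStruct.comul LinearMap.id := by
    rw [← TensorProduct.map_comp, ← TensorProduct.map_comp]
    simp [myconv, LinearMap.comp_assoc]
  have h2 : TensorProduct.map f (myconv g h) =
      TensorProduct.map LinearMap.id (LinearMap.mul' R B)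
        ∘ₗ TensorProduct.map f (TensorProduct.map g h)
        ∘ₗ TensorProduct.map LinearMap.id CoalgebraStruct.comul := by
    rw [← TensorProduct.map_comp, ← TensorProduct.map_comp]
    simp [myconv, LinearMap.comp_assoc]
  ext a
  rw [myconv_apply, myconv_apply, h1, h2]
  simp only [LinearMap.comp_apply]
  set u := TensorProduct.map CoalgebraStruct.comul LinearMap.id
      (CoalgebraStruct.comul (R := R) a) with hu
  have e1 : TensorProduct.map LinearMap.id (CoalgebraStruct.comul (R := R) (A := C))
      (CoalgebraStruct.comul a) = TensorProduct.assoc R C C C u := by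
    have := LinearMap.congr_fun hco a
    exact this.symm
  have e2 : TensorProduct.map f (TensorProduct.map g h) (TensorProduct.assoc R C C C u) =
      TensorProduct.assoc R B B B (TensorProduct.map (TensorProduct.map f g) h u) :=
    TensorProduct.map_map_assoc f g h u
  have e3 : LinearMap.mul' R B (TensorProduct.map LinearMap.id (LinearMap.mul' R B)
        (TensorProduct.assoc R B B B (TensorProduct.map (TensorProduct.map f g) h u))) =
      LinearMap.mul' R B (TensorProduct.map (LinearMap.mul' R B) LinearMap.id
        (TensorProduct.map (TensorProduct.map f g) h u)) := by
    set v := TensorProduct.map (TensorProduct.map f g) h u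
    induction v using TensorProduct.induction_on with
    | zero => simp
    | tmul x z =>
        induction x using TensorProduct.induction_on with
        | zero => simp
        | tmul x y => simp [mul_assoc]
        | add x y hx hy => simp_all [add_tmul]
    | add x y hx hy => simp_all
  rw [e1, e2, e3]

lemma myconv_unique
    (hco : (TensorProduct.assoc R C C C).toLinearMap ∘ₗ
        (CoalgebraStruct.comul (R := R) (A := C)).rTensor C ∘ₗ CoalgebraStruct.comul =
      (CoalgebraStruct.comul (R := R) (A := C)).lTensor C ∘ₗ CoalgebraStruct.comul)
    (hl : (CoalgebraStruct.counit (R := R) (A := C)).lTensor C ∘ₗ CoalgebraStruct.comul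
      = (TensorProduct.mk R C R).flip 1)
    (hr : (CoalgebraStruct.counit (R := R) (A := C)).rTensor C ∘ₗ CoalgebraStruct.comul
      = TensorProduct.mk R R C 1)
    {m f g : C →ₗ[R] B}
    (h1 : myconv g m = myunit) (h2 : myconv m f = myunit) : g = f :=
  calc g = myconv g myunit := (myconv_unit_right hl g).symm
    _ = myconv g (myconv m f) := by rw [h2]
    _ = myconv (myconv g m) f := (myconv_assoc hco g m f).symm
    _ = myconv myunit f := by rw [h1]
    _ = f := myconv_unit_left hr f

lemma myconv_comp {D : Type*} [AddCommMonoid D] [Module R D] [CoalgebraStruct R D]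
    (g : C →ₗ[R] D)
    (hg : CoalgebraStruct.comul ∘ₗ g =
      TensorProduct.map g g ∘ₗ CoalgebraStruct.comul (R := R) (A := C))
    (f h : D →ₗ[R] B) :
    myconv (f ∘ₗ g) (h ∘ₗ g) = myconv f h ∘ₗ g := by
  rw [myconv, myconv, TensorProduct.map_comp]
  rw [LinearMap.comp_assoc, LinearMap.comp_assoc, ← hg]
  rfl

end Conv

section TensorLaws

variable {M N : Type*} [AddCommMonoid M] [Module R M] [Coalgebra R M]
  [AddCommMonoid N] [Module R N] [Coalgebra R N]

lemma comul₂_tmul (x : M) (y : N) :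
    (CoalgebraStruct.comul (R := R) (A := M ⊗[R] N)) (x ⊗ₜ[R] y) =
      TensorProduct.tensorTensorTensorComm R M M N N
        ((CoalgebraStruct.comul (R := R) x) ⊗ₜ[R] (CoalgebraStruct.comul (R := R) y)) := by
  simp [TensorProduct.comul_tmul, AlgebraTensorModule.tensorTensorTensorComm_eq]

lemma counit₂_tmul (x : M) (y : N) :
    (CoalgebraStruct.counit (R := R) (A := M ⊗[R] N)) (x ⊗ₜ[R] y) =
      CoalgebraStruct.counit (R := R) x * CoalgebraStruct.counit (R := R) y := by
  simp [TensorProduct.counit_tmul, mul_comm]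

/-- coassociativity for the tensor-product coalgebra structure. -/
lemma coassoc₂ :
    (TensorProduct.assoc R (M ⊗[R] N) (M ⊗[R] N) (M ⊗[R] N)).toLinearMap ∘ₗ
        (CoalgebraStruct.comul (R := R) (A := M ⊗[R] N)).rTensor (M ⊗[R] N)
          ∘ₗ CoalgebraStruct.comul =
      (CoalgebraStruct.comul (R := R) (A := M ⊗[R] N)).lTensor (M ⊗[R] N)
        ∘ₗ CoalgebraStruct.comul := by
  set τ := TensorProduct.tensorTensorTensorComm R M M N N with hτ
  set Q₁ : ((M ⊗[R] M) ⊗[R] M) ⊗[R] ((N ⊗[R] N) ⊗[R] N) →ₗ[R]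
      (M ⊗[R] N) ⊗[R] ((M ⊗[R] N) ⊗[R] (M ⊗[R] N)) :=
    (TensorProduct.assoc R (M ⊗[R] N) (M ⊗[R] N) (M ⊗[R] N)).toLinearMap
      ∘ₗ TensorProduct.map τ.toLinearMap LinearMap.id
      ∘ₗ (TensorProduct.tensorTensorTensorComm R (M ⊗[R] M) M (N ⊗[R] N) N).toLinearMap
    with hQ₁
  set Q₂ : (M ⊗[R] (M ⊗[R] M)) ⊗[R] (N ⊗[R] (N ⊗[R] N)) →ₗ[R]
      (M ⊗[R] N) ⊗[R] ((M ⊗[R] N) ⊗[R] (M ⊗[R] N)) :=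
    TensorProduct.map LinearMap.id τ.toLinearMap
      ∘ₗ (TensorProduct.tensorTensorTensorComm R M (M ⊗[R] M) N (N ⊗[R] N)).toLinearMap
    with hQ₂
  have L1 : ∀ (u : M ⊗[R] M) (v : N ⊗[R] N),
      TensorProduct.assoc R (M ⊗[R] N) (M ⊗[R] N) (M ⊗[R] N)
        ((CoalgebraStruct.comul (R := R) (A := M ⊗[R] N)).rTensor (M ⊗[R] N)
          (τ (u ⊗ₜ[R] v))) =
      Q₁ (((CoalgebraStruct.comul (R := R) (A := M)).rTensor M u) ⊗ₜ[R] ((CoalgebraStruct.comul (R := R) (A := N)).rTensor N v)) := by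
    intro u v
    induction u using TensorProduct.induction_on with
    | zero => simp
    | tmul p q =>
        induction v using TensorProduct.induction_on with
        | zero => simp
        | tmul r s =>
            simp [hτ, hQ₁, comul₂_tmul, TensorProduct.tensorTensorTensorComm_tmul,
                AlgebraTensorModule.tensorTensorTensorComm_eq]
        | add v₁ v₂ h₁ h₂ => simp_all [TensorProduct.tmul_add]
    | add u₁ u₂ h₁ h₂ => simp_all [TensorProduct.add_tmul]
  have L2 : ∀ (u : M ⊗[R] M) (v : N ⊗[R] N),
      (CoalgebraStruct.comul (R := R) (A := M ⊗[R] N)).lTensor (M ⊗[R] N)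
          (τ (u ⊗ₜ[R] v)) =
      Q₂ (((CoalgebraStruct.comul (R := R) (A := M)).lTensor M u) ⊗ₜ[R] ((CoalgebraStruct.comul (R := R) (A := N)).lTensor N v)) := by
    intro u v
    induction u using TensorProduct.induction_on with
    | zero => simp
    | tmul p q =>
        induction v using TensorProduct.induction_on with
        | zero => simp
        | tmul r s =>
            simp [hτ, hQ₂, comul₂_tmul, TensorProduct.tensorTensorTensorComm_tmul,
                AlgebraTensorModule.tensorTensorTensorComm_eq]
        | add v₁ v₂ h₁ h₂ => simp_all [TensorProduct.tmul_add]
    | add u₁ u₂ h₁ h₂ => simp_all [TensorProduct.add_tmul]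
  have L3 : ∀ (c : (M ⊗[R] M) ⊗[R] M) (d : (N ⊗[R] N) ⊗[R] N),
      Q₁ (c ⊗ₜ[R] d) =
      Q₂ ((TensorProduct.assoc R M M M c) ⊗ₜ[R] (TensorProduct.assoc R N N N d)) := by
    intro c d
    induction c using TensorProduct.induction_on with
    | zero => simp
    | tmul U q =>
        induction d using TensorProduct.induction_on with
        | zero => simp
        | tmul V s =>
            induction U using TensorProduct.induction_on with
            | zero => simp
            | tmul p p' =>
                induction V using TensorProduct.induction_on with
                | zero => simp
                | tmul r r' =>
                    simp [hτ, hQ₁, hQ₂, TensorProduct.tensorTensorTensorComm_tmul]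
                | add V₁ V₂ h₁ h₂ =>
                    simp_all [TensorProduct.add_tmul, TensorProduct.tmul_add]
            | add U₁ U₂ h₁ h₂ =>
                simp_all [TensorProduct.add_tmul, TensorProduct.tmul_add]
        | add d₁ d₂ h₁ h₂ => simp_all [TensorProduct.tmul_add]
    | add c₁ c₂ h₁ h₂ => simp_all [TensorProduct.add_tmul]
  apply TensorProduct.ext'
  intro x y
  simp only [LinearMap.comp_apply, LinearEquiv.coe_coe]
  rw [comul₂_tmul, ← hτ, L1, L2, L3, Coalgebra.coassoc_apply, Coalgebra.coassoc_apply]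

/-- left counit law for the tensor-product coalgebra structure. -/
lemma counit₂_rTensor :
    (CoalgebraStruct.counit (R := R) (A := M ⊗[R] N)).rTensor (M ⊗[R] N)
        ∘ₗ CoalgebraStruct.comul =
      TensorProduct.mk R R (M ⊗[R] N) 1 := by
  set τ := TensorProduct.tensorTensorTensorComm R M M N N with hτ
  set P₁ : (R ⊗[R] M) ⊗[R] (R ⊗[R] N) →ₗ[R] R ⊗[R] (M ⊗[R] N) :=
    TensorProduct.map (LinearMap.mul' R R) LinearMap.id
      ∘ₗ (TensorProduct.tensorTensorTensorComm R R M R N).toLinearMap with hP₁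
  have L4 : ∀ (u : M ⊗[R] M) (v : N ⊗[R] N),
      (CoalgebraStruct.counit (R := R) (A := M ⊗[R] N)).rTensor (M ⊗[R] N)
          (τ (u ⊗ₜ[R] v)) =
      P₁ (((CoalgebraStruct.counit (R := R) (A := M)).rTensor M u) ⊗ₜ[R]
        ((CoalgebraStruct.counit (R := R) (A := N)).rTensor N v)) := by
    intro u v
    induction u using TensorProduct.induction_on with
    | zero => simp
    | tmul p q =>
        induction v using TensorProduct.induction_on with
        | zero => simp
        | tmul r s =>
            simp [hτ, hP₁, counit₂_tmul, TensorProduct.tensorTensorTensorComm_tmul, mul_comm]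
        | add v₁ v₂ h₁ h₂ => simp_all [TensorProduct.tmul_add]
    | add u₁ u₂ h₁ h₂ => simp_all [TensorProduct.add_tmul]
  apply TensorProduct.ext'
  intro x y
  simp only [LinearMap.comp_apply]
  rw [comul₂_tmul, ← hτ, L4, Coalgebra.rTensor_counit_comul, Coalgebra.rTensor_counit_comul]
  simp [hP₁, hτ, TensorProduct.tensorTensorTensorComm_tmul]

/-- right counit law for the tensor-product coalgebra structure. -/
lemma counit₂_lTensor :
    (CoalgebraStruct.counit (R := R) (A := M ⊗[R] N)).lTensor (M ⊗[R] N)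
        ∘ₗ CoalgebraStruct.comul =
      (TensorProduct.mk R (M ⊗[R] N) R).flip 1 := by
  set τ := TensorProduct.tensorTensorTensorComm R M M N N with hτ
  set P₂ : (M ⊗[R] R) ⊗[R] (N ⊗[R] R) →ₗ[R] (M ⊗[R] N) ⊗[R] R :=
    TensorProduct.map LinearMap.id (LinearMap.mul' R R)
      ∘ₗ (TensorProduct.tensorTensorTensorComm R M R N R).toLinearMap with hP₂
  have L5 : ∀ (u : M ⊗[R] M) (v : N ⊗[R] N),
      (CoalgebraStruct.counit (R := R) (A := M ⊗[R] N)).lTensor (M ⊗[R] N)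
          (τ (u ⊗ₜ[R] v)) =
      P₂ (((CoalgebraStruct.counit (R := R) (A := M)).lTensor M u) ⊗ₜ[R]
        ((CoalgebraStruct.counit (R := R) (A := N)).lTensor N v)) := by
    intro u v
    induction u using TensorProduct.induction_on with
    | zero => simp
    | tmul p q =>
        induction v using TensorProduct.induction_on with
        | zero => simp
        | tmul r s =>
            simp [hτ, hP₂, counit₂_tmul, TensorProduct.tensorTensorTensorComm_tmul, mul_comm]
        | add v₁ v₂ h₁ h₂ => simp_all [TensorProduct.tmul_add]
    | add u₁ u₂ h₁ h₂ => simp_all [TensorProduct.add_tmul]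
  apply TensorProduct.ext'
  intro x y
  simp only [LinearMap.comp_apply]
  rw [comul₂_tmul, ← hτ, L5, Coalgebra.lTensor_counit_comul, Coalgebra.lTensor_counit_comul]
  simp [hP₂, hτ, TensorProduct.tensorTensorTensorComm_tmul]

end TensorLaws

section Hopf

variable {A : Type*} [Semiring A] [HopfAlgebra R A]

lemma myconv_S_id :
    myconv (HopfAlgebra.antipode (R := R) (A := A)) LinearMap.id = myunit := by
  rw [myconv]
  rw [show TensorProduct.map (HopfAlgebra.antipode (R := R) (A := A)) LinearMap.id
      = (HopfAlgebra.antipode (R := R) (A := A)).rTensor A from rfl]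
  exact HopfAlgebra.mul_antipode_rTensor_comul

lemma myconv_id_S :
    myconv LinearMap.id (HopfAlgebra.antipode (R := R) (A := A)) = myunit := by
  rw [myconv]
  rw [show TensorProduct.map LinearMap.id (HopfAlgebra.antipode (R := R) (A := A))
      = (HopfAlgebra.antipode (R := R) (A := A)).lTensor A from rfl]
  exact HopfAlgebra.mul_antipode_lTensor_comul

lemma antipode_one' : HopfAlgebra.antipode (R := R) (A := A) (1 : A) = 1 := by
  have := LinearMap.congr_fun
    (HopfAlgebra.mul_antipode_rTensor_comul (R := R) (A := A)) 1
  simpa [Bialgebra.comul_one, Algebra.TensorProduct.one_def] using this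

lemma comul_comp_mul' :
    CoalgebraStruct.comul (R := R) (A := A) ∘ₗ LinearMap.mul' R A =
      TensorProduct.map (LinearMap.mul' R A) (LinearMap.mul' R A)
        ∘ₗ CoalgebraStruct.comul (R := R) (A := A ⊗[R] A) := by
  apply TensorProduct.ext'
  intro x y
  simp only [LinearMap.comp_apply]
  rw [LinearMap.mul'_apply, Bialgebra.comul_mul, comul₂_tmul]
  have key : ∀ (u v : A ⊗[R] A), TensorProduct.map (LinearMap.mul' R A) (LinearMap.mul' R A)
      (TensorProduct.tensorTensorTensorComm R A A A A (u ⊗ₜ[R] v)) = u * v := by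
    intro u v
    induction u using TensorProduct.induction_on with
    | zero => simp
    | tmul p q =>
        induction v using TensorProduct.induction_on with
        | zero => simp
        | tmul r s =>
            simp [TensorProduct.tensorTensorTensorComm_tmul,
              Algebra.TensorProduct.tmul_mul_tmul]
        | add v₁ v₂ h₁ h₂ => simp_all [TensorProduct.tmul_add, mul_add]
    | add u₁ u₂ h₁ h₂ => simp_all [TensorProduct.add_tmul, add_mul]
  rw [key]

lemma counit_comp_mul' :
    CoalgebraStruct.counit (R := R) (A := A) ∘ₗ LinearMap.mul' R A =
      CoalgebraStruct.counit (R := R) (A := A ⊗[R] A) := by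
  apply TensorProduct.ext'
  intro x y
  simp only [LinearMap.comp_apply]
  rw [LinearMap.mul'_apply, counit₂_tmul]
  exact Bialgebra.counit_mul x y

lemma fact1 :
    myconv (LinearMap.mul' R A)
      (HopfAlgebra.antipode (R := R) (A := A) ∘ₗ LinearMap.mul' R A) = myunit := by
  have h := myconv_comp (B := A) (LinearMap.mul' R A) comul_comp_mul'
    LinearMap.id (HopfAlgebra.antipode (R := R) (A := A))
  rw [LinearMap.id_comp, myconv_id_S] at h
  rw [h, myunit, myunit, LinearMap.comp_assoc, counit_comp_mul']

lemma fact2 :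
    myconv (LinearMap.mul' R A ∘ₗ TensorProduct.map
        (HopfAlgebra.antipode (R := R) (A := A)) (HopfAlgebra.antipode (R := R) (A := A))
        ∘ₗ (TensorProduct.comm R A A).toLinearMap)
      (LinearMap.mul' R A) = myunit := by
  apply TensorProduct.ext'
  intro x y
  set S := HopfAlgebra.antipode (R := R) (A := A) with hS
  set rx := Coalgebra.Repr.arbitrary R x with hrx
  set ry := Coalgebra.Repr.arbitrary R y with hry
  have hx := rx.eq
  have hy := ry.eq
  have e1 : myconv (LinearMap.mul' R A ∘ₗ TensorProduct.map S S
        ∘ₗ (TensorProduct.comm R A A).toLinearMap) (LinearMap.mul' R A) (x ⊗ₜ[R] y)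
      = ∑ i ∈ rx.index, ∑ j ∈ ry.index, (S (ry.left j) * S (rx.left i)) * (rx.right i * ry.right j) := by
    rw [myconv_apply, comul₂_tmul, ← hx, ← hy, TensorProduct.sum_tmul]
    rw [map_sum, map_sum, map_sum]
    refine Finset.sum_congr rfl fun i _ => ?_
    rw [TensorProduct.tmul_sum, map_sum, map_sum, map_sum]
    refine Finset.sum_congr rfl fun j _ => ?_
    simp [TensorProduct.tensorTensorTensorComm_tmul]
  rw [e1, Finset.sum_comm]
  have e2 : ∀ j ∈ ry.index, ∑ i ∈ rx.index, (S (ry.left j) * S (rx.left i)) * (rx.right i * ry.right j)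
      = S (ry.left j) * ((∑ i ∈ rx.index, S (rx.left i) * rx.right i) * ry.right j) := by
    intro j _
    rw [Finset.sum_mul, Finset.mul_sum]
    exact Finset.sum_congr rfl fun i _ => by simp [mul_assoc]
  rw [Finset.sum_congr rfl e2]
  have e3 : ∑ i ∈ rx.index, S (rx.left i) * rx.right i
      = Coalgebra.counit (R := R) x • (1 : A) :=
    HopfAlgebra.sum_antipode_mul_eq_smul rx
  rw [e3]
  have e4 : ∑ j ∈ ry.index, S (ry.left j) * ry.right j
      = Coalgebra.counit (R := R) y • (1 : A) :=
    HopfAlgebra.sum_antipode_mul_eq_smul ry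
  have e5 : ∑ j ∈ ry.index, S (ry.left j) * (Coalgebra.counit (R := R) x • (1 : A) * ry.right j)
      = Coalgebra.counit (R := R) x • ∑ j ∈ ry.index, S (ry.left j) * ry.right j := by
    rw [Finset.smul_sum]
    exact Finset.sum_congr rfl fun j _ => by
      rw [smul_mul_assoc, one_mul, mul_smul_comm]
  rw [e5, e4, myunit]
  simp [counit₂_tmul, Algebra.algebraMap_eq_smul_one, smul_smul, mul_comm]

lemma antipode_mul' (x y : A) :
    HopfAlgebra.antipode (R := R) (A := A) (x * y) =
      HopfAlgebra.antipode (R := R) (A := A) y * HopfAlgebra.antipode (R := R) (A := A) x := by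
  have hGF := myconv_unique (C := A ⊗[R] A) (B := A)
    coassoc₂ counit₂_lTensor counit₂_rTensor fact2 fact1
  have := LinearMap.congr_fun hGF (x ⊗ₜ[R] y)
  simpa [LinearMap.mul'_apply] using this.symm

end Hopf

section StarPart

variable {A : Type*} [Ring A] [HopfAlgebra ℂ A] [StarRing A] [StarModule ℂ A]

lemma antipode_star
    (sT : A ⊗[ℂ] A → A ⊗[ℂ] A)
    (hsT_add : ∀ u v : A ⊗[ℂ] A, sT (u + v) = sT u + sT v)
    (hsT_tmul : ∀ x y : A, sT (x ⊗ₜ[ℂ] y) = star x ⊗ₜ[ℂ] star y)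
    (hcomul_star : ∀ a : A,
      Coalgebra.comul (R := ℂ) (star a) = sT (Coalgebra.comul (R := ℂ) a))
    (hcounit_star : ∀ a : A,
      Coalgebra.counit (R := ℂ) (star a) = starRingEnd ℂ (Coalgebra.counit (R := ℂ) a))
    (hKac : ∀ a : A, HopfAlgebra.antipode (R := ℂ) (HopfAlgebra.antipode (R := ℂ) a) = a)
    (a : A) :
    HopfAlgebra.antipode (R := ℂ) (star a) = star (HopfAlgebra.antipode (R := ℂ) a) := by
  have star_antipode_star : ∀ b : A,
      star (HopfAlgebra.antipode (R := ℂ) (star b)) = HopfAlgebra.antipode (R := ℂ) b := by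
    set T : A →ₗ[ℂ] A :=
      { toFun := fun a => star (HopfAlgebra.antipode (R := ℂ) (star a))
        map_add' := fun a b => by simp [star_add, map_add]
        map_smul' := fun c a => by simp [star_smul, map_smul] } with hT
    set opE : A →ₗ[ℂ] Aᵐᵒᵖ := (MulOpposite.opLinearEquiv ℂ (M := A)).toLinearMap with hopE
    set sTA : A ⊗[ℂ] A →+ A ⊗[ℂ] A := AddMonoidHom.mk' sT hsT_add with hsTA
    -- identity (★★): ∑ right i * T (left i) = ε a • 1
    have key1 : ∀ (a : A) (r : Coalgebra.Repr ℂ a (A × A)),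
        ∑ i ∈ r.index, r.right i * star (HopfAlgebra.antipode (R := ℂ) (star (r.left i)))
          = Coalgebra.counit (R := ℂ) a • (1 : A) := by
      intro a r
      have hstar : ∑ i ∈ r.index, (star (r.left i)) ⊗ₜ[ℂ] (star (r.right i))
          = Coalgebra.comul (R := ℂ) (star a) := by
        rw [hcomul_star, ← r.eq]
        rw [show sT (∑ i ∈ r.index, r.left i ⊗ₜ[ℂ] r.right i)
            = sTA (∑ i ∈ r.index, r.left i ⊗ₜ[ℂ] r.right i) from rfl, map_sum]
        exact (Finset.sum_congr rfl fun i _ => by rw [hsTA, AddMonoidHom.mk'_apply, hsT_tmul])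
      have h0 := HopfAlgebra.sum_antipode_mul_eq_smul
        (⟨r.index, fun i => star (r.left i), fun i => star (r.right i), hstar⟩ :
          Coalgebra.Repr ℂ (star a) (A × A))
      simp only at h0
      calc ∑ i ∈ r.index, r.right i * star (HopfAlgebra.antipode (R := ℂ) (star (r.left i)))
          = ∑ i ∈ r.index,
              star (HopfAlgebra.antipode (R := ℂ) (star (r.left i)) * star (r.right i)) := by
            exact Finset.sum_congr rfl fun i _ => by rw [star_mul, star_star]
        _ = star (∑ i ∈ r.index,
              HopfAlgebra.antipode (R := ℂ) (star (r.left i)) * star (r.right i)) :=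
            (star_sum _ _).symm
        _ = star (Coalgebra.counit (R := ℂ) (star a) • (1 : A)) := by rw [h0]
        _ = Coalgebra.counit (R := ℂ) a • (1 : A) := by
            rw [hcounit_star, star_smul, star_one]
            simp
    -- identity (††): ∑ S (right i) * left i = ε a • 1
    have key3 : ∀ (a : A) (r : Coalgebra.Repr ℂ a (A × A)),
        ∑ i ∈ r.index, HopfAlgebra.antipode (R := ℂ) (r.right i) * r.left i
          = Coalgebra.counit (R := ℂ) a • (1 : A) := by
      intro a r
      have h0 := HopfAlgebra.sum_antipode_mul_eq_smul r
      calc ∑ i ∈ r.index, HopfAlgebra.antipode (R := ℂ) (r.right i) * r.left i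
          = ∑ i ∈ r.index, HopfAlgebra.antipode (R := ℂ)
              (HopfAlgebra.antipode (R := ℂ) (r.left i) * r.right i) :=
            Finset.sum_congr rfl fun i _ => by rw [antipode_mul', hKac]
        _ = HopfAlgebra.antipode (R := ℂ)
              (∑ i ∈ r.index, HopfAlgebra.antipode (R := ℂ) (r.left i) * r.right i) :=
            (map_sum _ _ _).symm
        _ = HopfAlgebra.antipode (R := ℂ) (Coalgebra.counit (R := ℂ) a • (1 : A)) := by rw [h0]
        _ = Coalgebra.counit (R := ℂ) a • (1 : A) := by rw [map_smul, antipode_one']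
    -- convolution identities in Hom(A, Aᵐᵒᵖ)
    have conv1 : myconv (opE ∘ₗ T) opE = myunit := by
      ext a
      set r := Coalgebra.Repr.arbitrary ℂ a with hr
      rw [myconv_apply, ← r.eq, map_sum, map_sum]
      have e : ∀ i ∈ r.index, LinearMap.mul' ℂ Aᵐᵒᵖ
          (TensorProduct.map (opE ∘ₗ T) opE (r.left i ⊗ₜ[ℂ] r.right i))
          = MulOpposite.op (r.right i *
              star (HopfAlgebra.antipode (R := ℂ) (star (r.left i)))) := by
        intro i _
        simp [hT, hopE, MulOpposite.op_mul]
      rw [Finset.sum_congr rfl e, ← Finset.op_sum, key1 a r]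
      simp [myunit, Algebra.algebraMap_eq_smul_one]
    have conv2 : myconv opE (opE ∘ₗ HopfAlgebra.antipode (R := ℂ) (A := A)) = myunit := by
      ext a
      set r := Coalgebra.Repr.arbitrary ℂ a with hr
      rw [myconv_apply, ← r.eq, map_sum, map_sum]
      have e : ∀ i ∈ r.index, LinearMap.mul' ℂ Aᵐᵒᵖ
          (TensorProduct.map opE (opE ∘ₗ HopfAlgebra.antipode (R := ℂ) (A := A))
            (r.left i ⊗ₜ[ℂ] r.right i))
          = MulOpposite.op (HopfAlgebra.antipode (R := ℂ) (r.right i) * r.left i) := by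
        intro i _
        simp [hopE, MulOpposite.op_mul]
      rw [Finset.sum_congr rfl e, ← Finset.op_sum, key3 a r]
      simp [myunit, Algebra.algebraMap_eq_smul_one]
    have huniq : opE ∘ₗ T = opE ∘ₗ HopfAlgebra.antipode (R := ℂ) (A := A) :=
      myconv_unique (C := A) (B := Aᵐᵒᵖ) Coalgebra.coassoc
        Coalgebra.lTensor_counit_comp_comul Coalgebra.rTensor_counit_comp_comul
        conv1 conv2
    intro b
    have hb := LinearMap.congr_fun huniq b
    have hb2 : MulOpposite.op (T b) =
        MulOpposite.op (HopfAlgebra.antipode (R := ℂ) b) := by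
      simpa [hopE] using hb
    exact MulOpposite.op_injective hb2
  have h := star_antipode_star a
  rw [← h, star_star]

end StarPart

end StateAntipodeAux

/-- For a Hopf ∗-algebra `A` over ℂ (`Δ(a★) = (★ ⊗ ★)(Δ a)`,
`ε(a★) = conj (ε a)`) of Kac type (`S ∘ S = id`), the composition of a state `φ` with the
antipode is again a state: `(φ ∘ S)(1) = 1` and `(φ ∘ S)(a★ a) ≥ 0` for all `a`.
The map `(★ ⊗ ★)` on `A ⊗ A` is encoded by an additive map `sT` acting on elementary tensors
by `x ⊗ y ↦ x★ ⊗ y★`. -/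
theorem stmt11
    (A : Type*) [Ring A] [HopfAlgebra ℂ A] [StarRing A] [StarModule ℂ A]
    (sT : A ⊗[ℂ] A → A ⊗[ℂ] A)
    (hsT_add : ∀ u v : A ⊗[ℂ] A, sT (u + v) = sT u + sT v)
    (hsT_tmul : ∀ x y : A, sT (x ⊗ₜ[ℂ] y) = star x ⊗ₜ[ℂ] star y)
    -- `Δ(a★) = (★ ⊗ ★)(Δ a)`
    (hcomul_star : ∀ a : A,
      Coalgebra.comul (R := ℂ) (star a) = sT (Coalgebra.comul (R := ℂ) a))
    -- `ε(a★) = conj (ε a)`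
    (hcounit_star : ∀ a : A,
      Coalgebra.counit (R := ℂ) (star a) = starRingEnd ℂ (Coalgebra.counit (R := ℂ) a))
    -- Kac condition `S ∘ S = id`
    (hKac : ∀ a : A, HopfAlgebra.antipode (R := ℂ) (HopfAlgebra.antipode (R := ℂ) a) = a)
    (φ : A →ₗ[ℂ] ℂ) (hφ1 : φ 1 = 1)
    (hφpos : ∀ a : A, 0 ≤ φ (star a * a)) :
    φ (HopfAlgebra.antipode (R := ℂ) (1 : A)) = 1 ∧
    ∀ a : A, 0 ≤ φ (HopfAlgebra.antipode (R := ℂ) (star a * a)) := by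
  constructor
  · rw [antipode_one']
    exact hφ1
  · intro a
    have hm : HopfAlgebra.antipode (R := ℂ) (star a * a)
        = HopfAlgebra.antipode (R := ℂ) a * star (HopfAlgebra.antipode (R := ℂ) a) := by
      rw [antipode_mul']
      rw [antipode_star sT hsT_add hsT_tmul hcomul_star hcounit_star hKac]
    have hb := hφpos (star (HopfAlgebra.antipode (R := ℂ) a))
    rw [star_star] at hb
    rw [hm]
    exact hb
end

section
/- Let G be a compact topological group, H a complex Hilbert space, and U a strongly continuous unitary representation of G on H (U is a group homomorphism from G into the unitary operators on H such that x ↦ U_x ξ is continuous for every ξ ∈ H). Let μ be a Borel probability measure on G and let ξ ∈ H. Then the Bochner integral ∫_G U_x ξ dμ(x) equals ξ if and only if U_x ξ = ξ for μ-almost every x ∈ G; since the stabilizer {x ∈ G : U_x ξ = ξ} is closed, this holds if and only if μ is concentrated on (equivalently, supported in) the stabilizer of ξ. -/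
open MeasureTheory

/-- For a strongly continuous unitary representation `U` of a compact group
`G` on a complex Hilbert space `H`, a Borel probability measure `μ` on `G`, and `ξ ∈ H`:
the stabilizer `{x : U x ξ = ξ}` is closed, and the Bochner integral `∫ U_x ξ dμ(x)` equals
`ξ` iff `U_x ξ = ξ` for `μ`-almost every `x`, iff `μ` gives full measure to the stabilizer. -/
theorem stmt12
    (G : Type*) [TopologicalSpace G] [Group G] [IsTopologicalGroup G] [CompactSpace G]
    [MeasurableSpace G] [BorelSpace G]
    (H : Type*) [NormedAddCommGroup H] [InnerProductSpace ℂ H] [CompleteSpace H]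
    (U : G →* (H →L[ℂ] H))
    (hUiso : ∀ (x : G) (v : H), ‖U x v‖ = ‖v‖)
    (hUcont : ∀ v : H, Continuous fun x : G => U x v)
    (μ : Measure G) [IsProbabilityMeasure μ] (ξ : H) :
    IsClosed {x : G | U x ξ = ξ} ∧
    ((∫ x, U x ξ ∂μ) = ξ ↔ ∀ᵐ x ∂μ, U x ξ = ξ) ∧
    ((∫ x, U x ξ ∂μ) = ξ ↔ μ {x : G | U x ξ = ξ} = 1) := by
  have hclosed : IsClosed {x : G | U x ξ = ξ} :=
    isClosed_eq (hUcont ξ) continuous_const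
  have hint : Integrable (fun x => U x ξ) μ :=
    (hUcont ξ).integrable_of_hasCompactSupport (isClosed_tsupport _).isCompact
  have key : (∫ x, U x ξ ∂μ) = ξ ↔ ∀ᵐ x ∂μ, U x ξ = ξ := by
    constructor
    · intro h
      have hnorm : Integrable (fun x => ‖U x ξ - ξ‖ ^ 2) μ :=
        (((hUcont ξ).sub continuous_const).norm.pow 2).integrable_of_hasCompactSupport
          (isClosed_tsupport _).isCompact
      have hre : ∫ x, RCLike.re (inner ℂ ξ (U x ξ) : ℂ) ∂μ = ‖ξ‖ ^ 2 := by
        have h1 : ∫ x, (inner ℂ ξ (U x ξ) : ℂ) ∂μ = (inner ℂ ξ ξ : ℂ) := by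
          rw [integral_inner hint, h]
        have h2 := congrArg (RCLike.re (K := ℂ)) h1
        rw [← integral_re (hint.const_inner ξ)] at h2
        rw [h2, inner_self_eq_norm_sq]
      have hzero : ∫ x, ‖U x ξ - ξ‖ ^ 2 ∂μ = 0 := by
        have hexp : ∀ x, ‖U x ξ - ξ‖ ^ 2
            = ‖ξ‖ ^ 2 + ‖ξ‖ ^ 2 - 2 * RCLike.re (inner ℂ ξ (U x ξ) : ℂ) := by
          intro x
          rw [@norm_sub_sq ℂ H _ _ _ (U x ξ) ξ, hUiso x ξ,
            inner_re_symm (𝕜 := ℂ) (U x ξ) ξ]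
          ring
        simp_rw [hexp]
        rw [integral_sub (integrable_const _)
          (((hint.const_inner ξ).re).const_mul 2)]
        rw [integral_const, probReal_univ, integral_const_mul, hre]
        simp
        ring
      have hae : ∀ᵐ x ∂μ, ‖U x ξ - ξ‖ ^ 2 = 0 := by
        have hnn : 0 ≤ᵐ[μ] fun x => ‖U x ξ - ξ‖ ^ 2 :=
          Filter.Eventually.of_forall fun x => by positivity
        exact (integral_eq_zero_iff_of_nonneg_ae hnn hnorm).mp hzero
      filter_upwards [hae] with x hx
      have : ‖U x ξ - ξ‖ = 0 := by nlinarith [norm_nonneg (U x ξ - ξ)]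
      rw [norm_eq_zero, sub_eq_zero] at this
      exact this
    · intro h
      calc (∫ x, U x ξ ∂μ) = ∫ _, ξ ∂μ := integral_congr_ae h
        _ = ξ := by simp
  refine ⟨hclosed, key, key.trans ?_⟩
  rw [ae_iff_measure_eq hclosed.measurableSet.nullMeasurableSet, measure_univ]
end

section
/- Let A be a unital C*-algebra, d ≥ 1, and let u : Fin d → Fin d → A satisfy the column-isometry relation Σ_i (u i j)★ · (u i l) = (if j = l then 1 else 0) for all j, l. Let φ : A → ℂ be a positive unital linear functional (φ(1) = 1 and φ(a★a) ≥ 0 for all a), and let ξ ∈ ℂ^d. Then the following are equivalent: (i) Σ_j φ(u i j) · ξ_j = ξ_i for every i (the numerical matrix (φ(u i j)) fixes ξ); (ii) Σ_{i,j} φ(u i j) · ξ_j · conj(ξ_i) = ‖ξ‖². -/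
open scoped ComplexOrder

/-- Let `A` be a unital C*-algebra, `u : Fin d → Fin d → A` satisfying the
column isometry relation `Σ_i (u i j)★ (u i l) = δ_{jl}`, `φ` a positive unital linear
functional on `A` and `ξ ∈ ℂ^d`.  Then the numerical matrix `(φ(u i j))` fixes `ξ` if and only
if `Σ_{i,j} φ(u i j) ξ_j conj(ξ_i) = ‖ξ‖²`. -/
theorem stmt14
    (A : Type*) [CStarAlgebra A]
    (d : ℕ) (hd : 1 ≤ d) (u : Fin d → Fin d → A)
    (hcol : ∀ j l, ∑ i, star (u i j) * u i l = if j = l then 1 else 0)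
    (φ : A →ₗ[ℂ] ℂ) (hφ1 : φ 1 = 1) (hφpos : ∀ a : A, 0 ≤ φ (star a * a))
    (ξ : EuclideanSpace ℂ (Fin d)) :
    (∀ i, ∑ j, φ (u i j) * ξ j = ξ i) ↔
      ∑ i, ∑ j, φ (u i j) * ξ j * starRingEnd ℂ (ξ i) = (‖ξ‖ : ℂ) ^ 2 := by
  classical
  have hsc : ∀ z : ℂ, 0 ≤ z → (starRingEnd ℂ) z = z := fun z h =>
    Complex.conj_eq_iff_im.2 (Complex.le_def.1 h).2.symm
  -- the norm squared as a sum
  have hnorm : (‖ξ‖ : ℂ) ^ 2 = ∑ j, (starRingEnd ℂ) (ξ j) * ξ j := by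
    have h1 : ‖ξ‖ ^ 2 = ∑ j, Complex.normSq (ξ j) := by
      rw [EuclideanSpace.norm_eq, Real.sq_sqrt (by positivity)]
      exact Finset.sum_congr rfl fun j _ => by
        rw [Complex.sq_norm]
    calc (‖ξ‖ : ℂ) ^ 2 = ((‖ξ‖ ^ 2 : ℝ) : ℂ) := by push_cast; ring
      _ = ∑ j, ((Complex.normSq (ξ j) : ℝ) : ℂ) := by rw [h1]; push_cast; ring
      _ = ∑ j, (starRingEnd ℂ) (ξ j) * ξ j :=
          Finset.sum_congr rfl fun j _ => Complex.normSq_eq_conj_mul_self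
  -- hermiticity of φ
  have herm : ∀ b : A, φ (star b) = (starRingEnd ℂ) (φ b) := by
    intro b
    have h1 : star (1 + b) * (1 + b) = 1 + b + star b + star b * b := by
      rw [star_add, star_one]; noncomm_ring
    have h2 : star (1 + Complex.I • b) * (1 + Complex.I • b)
        = 1 + Complex.I • b + (-Complex.I) • star b + star b * b := by
      rw [star_add, star_one, star_smul, Complex.star_def, Complex.conj_I]
      simp only [add_mul, mul_add, one_mul, mul_one, smul_mul_assoc, mul_smul_comm,
        smul_smul, smul_add, smul_sub, neg_smul, neg_mul, Complex.I_mul_I, neg_neg, one_smul]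
      match_scalars <;> simp [Complex.I_sq] <;> ring
    have er : (starRingEnd ℂ) (φ (star b * b)) = φ (star b * b) := hsc _ (hφpos _)
    have e1 := hsc _ (hφpos (1 + b))
    have e2 := hsc _ (hφpos (1 + Complex.I • b))
    rw [h1] at e1
    rw [h2] at e2
    simp only [map_add, map_smul, hφ1, smul_eq_mul, map_mul, map_one, map_neg,
      Complex.conj_I, er] at e1 e2
    linear_combination (-(e1) - Complex.I * e2) / 2
      - ((starRingEnd ℂ) (φ b) - (starRingEnd ℂ) (φ (star b)) + φ b - φ (star b)) / 2
        * Complex.I_mul_I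
  -- Cauchy–Schwarz for φ
  have hcs : ∀ b : A, (starRingEnd ℂ) (φ b) * φ b ≤ φ (star b * b) := by
    intro b
    have h := hφpos (b - φ b • 1)
    have hb : star (b - φ b • 1) * (b - φ b • 1)
        = star b * b - φ b • star b - (starRingEnd ℂ) (φ b) • b
          + ((starRingEnd ℂ) (φ b) * φ b) • 1 := by
      rw [star_sub, star_smul, star_one, Complex.star_def]
      simp only [sub_mul, mul_sub, smul_mul_assoc, mul_smul_comm, smul_smul,
        smul_add, smul_sub, one_mul, mul_one]
      module
    have heq : φ (star (b - φ b • 1) * (b - φ b • 1))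
        = φ (star b * b) - (starRingEnd ℂ) (φ b) * φ b := by
      rw [hb]
      simp only [map_add, map_sub, map_smul, hφ1, smul_eq_mul, mul_one, herm b]
      ring
    rw [heq] at h
    exact sub_nonneg.mp h
  -- the vector v = Mξ
  set v : EuclideanSpace ℂ (Fin d) := WithLp.toLp 2 (fun i => ∑ j, φ (u i j) * ξ j) with hv
  set bfun : Fin d → A := fun i => ∑ j, ξ j • u i j with hbfun
  have hbφ : ∀ i, φ (bfun i) = v i := by
    intro i
    show φ (∑ j, ξ j • u i j) = ∑ j, φ (u i j) * ξ j
    rw [map_sum]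
    exact Finset.sum_congr rfl fun j _ => by rw [map_smul, smul_eq_mul, mul_comm]
  have hsum : ∑ i, φ (star (bfun i) * bfun i) = (‖ξ‖ : ℂ) ^ 2 := by
    have key : ∑ i, star (bfun i) * bfun i
        = ∑ j, ((starRingEnd ℂ) (ξ j) * ξ j) • (1 : A) := by
      have step : ∀ i, star (bfun i) * bfun i
          = ∑ j, ∑ l, ((starRingEnd ℂ) (ξ j) * ξ l) • (star (u i j) * u i l) := by
        intro i
        show star (∑ j, ξ j • u i j) * (∑ j, ξ j • u i j) = _
        rw [star_sum, Finset.sum_mul]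
        refine Finset.sum_congr rfl fun j _ => ?_
        rw [Finset.mul_sum]
        refine Finset.sum_congr rfl fun l _ => ?_
        rw [star_smul, Complex.star_def, smul_mul_assoc, mul_smul_comm, smul_smul]
      calc ∑ i, star (bfun i) * bfun i
          = ∑ i, ∑ j, ∑ l, ((starRingEnd ℂ) (ξ j) * ξ l) • (star (u i j) * u i l) :=
            Finset.sum_congr rfl fun i _ => step i
        _ = ∑ j, ∑ l, ((starRingEnd ℂ) (ξ j) * ξ l) • ∑ i, star (u i j) * u i l := by
            rw [Finset.sum_comm]
            refine Finset.sum_congr rfl fun j _ => ?_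
            rw [Finset.sum_comm]
            exact Finset.sum_congr rfl fun l _ => (Finset.smul_sum).symm
        _ = ∑ j, ((starRingEnd ℂ) (ξ j) * ξ j) • (1 : A) := by
            refine Finset.sum_congr rfl fun j _ => ?_
            simp [hcol]
    rw [← map_sum, key, map_sum]
    simp only [map_smul, hφ1, smul_eq_mul, mul_one]
    exact hnorm.symm
  have hinner : ∀ w : EuclideanSpace ℂ (Fin d),
      (inner ℂ ξ w : ℂ) = ∑ i, (starRingEnd ℂ) (ξ i) * w i := by
    intro w
    rw [PiLp.inner_apply]
    simp [RCLike.inner_apply]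
    exact Finset.sum_congr rfl fun i _ => mul_comm _ _
  constructor
  · intro h
    calc ∑ i, ∑ j, φ (u i j) * ξ j * starRingEnd ℂ (ξ i)
        = ∑ i, (∑ j, φ (u i j) * ξ j) * starRingEnd ℂ (ξ i) :=
          Finset.sum_congr rfl fun i _ => (Finset.sum_mul ..).symm
      _ = ∑ i, (starRingEnd ℂ) (ξ i) * ξ i := by
          refine Finset.sum_congr rfl fun i _ => ?_
          rw [h i, mul_comm]
      _ = (‖ξ‖ : ℂ) ^ 2 := hnorm.symm
  · intro h
    by_cases hξ : ξ = 0
    · intro i; simp [hξ]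
    have hξn : ‖ξ‖ ≠ 0 := norm_ne_zero_iff.mpr hξ
    -- ⟪ξ, v⟫ = ‖ξ‖²
    have hin : (inner ℂ ξ v : ℂ) = (‖ξ‖ : ℂ) ^ 2 := by
      rw [hinner v, ← h]
      refine Finset.sum_congr rfl fun i _ => ?_
      show (starRingEnd ℂ) (ξ i) * ∑ j, φ (u i j) * ξ j = _
      rw [Finset.mul_sum]
      exact Finset.sum_congr rfl fun j _ => by ring
    -- ‖v‖ ≤ ‖ξ‖
    have hvle : ∑ i, (starRingEnd ℂ) (v i) * v i ≤ (‖ξ‖ : ℂ) ^ 2 := by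
      rw [← hsum]
      exact Finset.sum_le_sum fun i _ => by rw [← hbφ i]; exact hcs (bfun i)
    have hnv2 : ‖v‖ ^ 2 ≤ ‖ξ‖ ^ 2 := by
      have h1 : ‖v‖ ^ 2 = RCLike.re (inner ℂ v v : ℂ) := norm_sq_eq_re_inner (𝕜 := ℂ) v
      have h2 : (inner ℂ v v : ℂ) = ∑ i, (starRingEnd ℂ) (v i) * v i := by
        rw [PiLp.inner_apply]; simp [RCLike.inner_apply]
        exact Finset.sum_congr rfl fun i _ => (Complex.conj_mul' _).symm
      have h3 := (Complex.le_def.1 hvle).1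
      rw [h1, h2]
      simpa [← Complex.ofReal_pow] using h3
    have hnvle : ‖v‖ ≤ ‖ξ‖ :=
      le_of_pow_le_pow_left₀ (n := 2) two_ne_zero (norm_nonneg ξ) hnv2
    -- ‖ξ‖ ≤ ‖v‖ via Cauchy–Schwarz in ℂ^d
    have hle2 : ‖ξ‖ ^ 2 ≤ ‖ξ‖ * ‖v‖ := by
      have hcsn := norm_inner_le_norm (𝕜 := ℂ) ξ v
      rw [hin] at hcsn
      calc ‖ξ‖ ^ 2 = ‖((‖ξ‖ : ℂ) ^ 2)‖ := by
            rw [norm_pow, Complex.norm_real, Real.norm_eq_abs, abs_of_nonneg (norm_nonneg ξ)]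
        _ ≤ ‖ξ‖ * ‖v‖ := hcsn
    have hvge : ‖ξ‖ ≤ ‖v‖ := by
      have hpos : 0 < ‖ξ‖ := lt_of_le_of_ne (norm_nonneg ξ) (Ne.symm hξn)
      nlinarith
    have hnveq : ‖v‖ = ‖ξ‖ := le_antisymm hnvle hvge
    -- equality case of Cauchy–Schwarz
    have heq : (‖v‖ : ℂ) • ξ = (‖ξ‖ : ℂ) • v := by
      apply inner_eq_norm_mul_iff.mp
      rw [hin, hnveq]
      show ((‖ξ‖ : ℝ) : ℂ) ^ 2 = ((‖ξ‖ : ℝ) : ℂ) * ((‖ξ‖ : ℝ) : ℂ)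
      ring
    rw [hnveq] at heq
    have hξv : ξ = v :=
      smul_right_injective (EuclideanSpace ℂ (Fin d))
        (by exact_mod_cast Complex.ofReal_ne_zero.mpr hξn : ((‖ξ‖ : ℂ)) ≠ 0) heq
    intro i
    have hfin := congrFun (congrArg (fun w : EuclideanSpace ℂ (Fin d) => (w : Fin d → ℂ)) hξv) i
    exact (hfin : ξ i = ∑ j, φ (u i j) * ξ j).symm
end

section
/- Let A be a Hopf ∗-algebra over ℂ (Hopf algebra with comultiplication Δ, counit ε, antipode S; star-ring structure with Δ(a★) = (★ ⊗ ★)(Δ a)), with the Kac condition S ∘ S = id. Let h : A → ℂ be an algebraic Haar state: h(1) = 1; (id ⊗ h)(Δ a) = h(a)·1 and (h ⊗ id)(Δ a) = h(a)·1 for all a; h(a★) = conj(h(a)); and h nondegenerate (if h(b★ c) = 0 for all b ∈ A then c = 0). Let u : Fin d → Fin d → A be a unitary d-dimensional matrix corepresentation: Δ(u i j) = Σ_k (u i k) ⊗ (u k j), Σ_k (u k i)★ (u k j) = δ_{ij}·1, Σ_k (u i k)(u j k)★ = δ_{ij}·1. Let α : M_d(ℂ) → M_d(ℂ) ⊗ A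 be the conjugation coaction α(T)_{ij} = Σ_{k,l} T_{kl} · (u i k)(u j l)★, and let P ∈ M_d(ℂ) be an orthogonal projection (P = P★ = P²). Define the Berezin symbol σ : M_d(ℂ) → A by σ_T = (tr ⊗ id)((P ⊗ 1)·α(T)) (tr the unnormalized trace), the Berezin adjoint σ̆ : A → M_d(ℂ) by σ̆_a = d · (id ⊗ h)( ((id ⊗ S)(α(P))) · (1 ⊗ a) ), and the functional h_P : A → ℂ by h_P(x) = d · h(σ_P · x). Then for every a ∈ A one has σ(σ̆_a) = (h_P ⊗ id)(Δ a). -/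
open scoped TensorProduct

set_option maxHeartbeats 1600000

/-- For a Kac-type Hopf ∗-algebra `A` over ℂ with an algebraic Haar state
`h`, a unitary matrix corepresentation `u` of dimension `d`, the conjugation coaction
`α(T)_{ij} = Σ_{k,l} T_{kl} · u_{ik} (u_{jl})★` (with `M_d(ℂ) ⊗ A` identified with `M_d(A)`),
and an orthogonal projection `P`, the Berezin symbol `σ_T = (tr ⊗ id)((P ⊗ 1) α(T))`, the
Berezin adjoint `σ̆_a = d (id ⊗ h)(((id ⊗ S)(α P)) (1 ⊗ a))` and the state
`h_P(x) = d · h(σ_P x)` satisfy the Berezin-transform formula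
`σ(σ̆_a) = (h_P ⊗ id)(Δ a)` for every `a ∈ A`. -/
theorem stmt15
    (A : Type*) [Ring A] [HopfAlgebra ℂ A] [StarRing A]
    -- ∗-compatibility of the comultiplication, `Δ(a★) = (★ ⊗ ★)(Δ a)`,
    -- where `(★ ⊗ ★)` is encoded by the additive map `sT`
    (sT : A ⊗[ℂ] A → A ⊗[ℂ] A)
    (hsT_add : ∀ v w : A ⊗[ℂ] A, sT (v + w) = sT v + sT w)
    (hsT_tmul : ∀ x y : A, sT (x ⊗ₜ[ℂ] y) = star x ⊗ₜ[ℂ] star y)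
    (hcomul_star : ∀ a : A,
      Coalgebra.comul (R := ℂ) (star a) = sT (Coalgebra.comul (R := ℂ) a))
    -- Kac condition `S ∘ S = id`
    (hKac : ∀ a : A, HopfAlgebra.antipode (R := ℂ) (HopfAlgebra.antipode (R := ℂ) a) = a)
    -- the algebraic Haar state
    (h : A →ₗ[ℂ] ℂ) (hh1 : h 1 = 1)
    (hinvR : ∀ a : A,
      (TensorProduct.rid ℂ A) ((LinearMap.lTensor A h) (Coalgebra.comul (R := ℂ) a)) =
        h a • (1 : A))
    (hinvL : ∀ a : A,
      (TensorProduct.lid ℂ A) ((LinearMap.rTensor A h) (Coalgebra.comul (R := ℂ) a)) =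
        h a • (1 : A))
    (hstar : ∀ a : A, h (star a) = starRingEnd ℂ (h a))
    (hnondeg : ∀ c : A, (∀ b : A, h (star b * c) = 0) → c = 0)
    -- the unitary matrix corepresentation
    (d : ℕ) (u : Fin d → Fin d → A)
    (hΔ : ∀ i j, Coalgebra.comul (R := ℂ) (u i j) = ∑ k, u i k ⊗ₜ[ℂ] u k j)
    (hcol : ∀ i j, ∑ k, star (u k i) * u k j = if i = j then 1 else 0)
    (hrow : ∀ i j, ∑ k, u i k * star (u j k) = if i = j then 1 else 0)
    -- the conjugation coaction, entrywise
    (α : Matrix (Fin d) (Fin d) ℂ → Matrix (Fin d) (Fin d) A)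
    (hα : ∀ (T : Matrix (Fin d) (Fin d) ℂ) (i j : Fin d),
      α T i j = ∑ k, ∑ l, T k l • (u i k * star (u j l)))
    -- the orthogonal projection
    (P : Matrix (Fin d) (Fin d) ℂ) (hP1 : P.conjTranspose = P) (hP2 : P * P = P)
    -- the Berezin symbol `σ_T = (tr ⊗ id)((P ⊗ 1) α(T))`
    (σ : Matrix (Fin d) (Fin d) ℂ → A)
    (hσ : ∀ T : Matrix (Fin d) (Fin d) ℂ, σ T = ∑ i, ∑ k, P i k • α T k i)
    -- the Berezin adjoint `σ̆_a = d (id ⊗ h)(((id ⊗ S)(α P)) (1 ⊗ a))`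
    (σbr : A → Matrix (Fin d) (Fin d) ℂ)
    (hσbr : ∀ (a : A) (i j : Fin d),
      σbr a i j = (d : ℂ) * h (HopfAlgebra.antipode (R := ℂ) (α P i j) * a))
    -- the functional `h_P(x) = d · h(σ_P x)`
    (hP : A →ₗ[ℂ] ℂ) (hhP : ∀ x : A, hP x = (d : ℂ) * h (σ P * x)) :
    ∀ a : A,
      σ (σbr a) =
        (TensorProduct.lid ℂ A) ((LinearMap.rTensor A hP) (Coalgebra.comul (R := ℂ) a)) := by
  set S : A →ₗ[ℂ] A := HopfAlgebra.antipode (R := ℂ) with hSdef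
  -- scalar injectivity
  have hscal : ∀ c c' : ℂ, c • (1 : A) = c' • (1 : A) → c = c' := by
    intro c c' hcc
    have := congrArg h hcc
    simpa [map_smul, hh1] using this
  -- star of a ℂ-smul (via nondegeneracy)
  have hstar_smul : ∀ (c : ℂ) (y : A), star (c • y) = (starRingEnd ℂ c) • star y := by
    intro c y
    have key : ∀ b : A, h (star b * (star (c • y) - (starRingEnd ℂ c) • star y)) = 0 := by
      intro b
      have e1 : star b * star (c • y) = star ((c • y) * b) := by rw [star_mul]
      have e2 : star b * ((starRingEnd ℂ c) • star y) = (starRingEnd ℂ c) • star (y * b) := by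
        rw [star_mul, mul_smul_comm]
      have e3 : h (star (c • y * b)) = starRingEnd ℂ c * starRingEnd ℂ (h (y * b)) := by
        rw [smul_mul_assoc, hstar, map_smul, smul_eq_mul, map_mul]
      have e4 : h ((starRingEnd ℂ c) • star (y * b)) = starRingEnd ℂ c * starRingEnd ℂ (h (y * b)) := by
        rw [map_smul, smul_eq_mul, hstar]
      rw [mul_sub, map_sub, e1, e2, e3, e4, sub_self]
    have := hnondeg _ key
    exact sub_eq_zero.mp this
  classical
  -- counit on matrix entries
  have base : ∀ i j, ∑ k, Coalgebra.counit (R := ℂ) (u i k) • u k j = u i j := by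
    intro i j
    have h1 := Coalgebra.rTensor_counit_comul (R := ℂ) (u i j)
    rw [hΔ, map_sum] at h1
    have h2 := congrArg (TensorProduct.lid ℂ A) h1
    simpa [map_sum] using h2
  have hcounit : ∀ i j, Coalgebra.counit (R := ℂ) (u i j) = if i = j then (1:ℂ) else 0 := by
    intro i l
    apply hscal
    calc (Coalgebra.counit (R := ℂ) (u i l)) • (1:A)
        = ∑ k, Coalgebra.counit (R := ℂ) (u i k) • (if k = l then (1:A) else 0) := by
          simp [smul_ite]
      _ = ∑ k, Coalgebra.counit (R := ℂ) (u i k) • (∑ j, u k j * star (u l j)) :=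
          Finset.sum_congr rfl fun k _ => by rw [hrow]
      _ = ∑ j, (∑ k, Coalgebra.counit (R := ℂ) (u i k) • u k j) * star (u l j) := by
          simp_rw [Finset.smul_sum, Finset.sum_mul, smul_mul_assoc]
          exact Finset.sum_comm
      _ = ∑ j, u i j * star (u l j) := Finset.sum_congr rfl fun j _ => by rw [base]
      _ = (if i = l then (1:ℂ) else 0) • 1 := by rw [hrow]; split <;> simp
  -- antipode axiom on matrix entries
  have ax1 : ∀ i j, ∑ k, S (u i k) * u k j = (if i = j then (1:ℂ) else 0) • (1:A) := by
    intro i j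
    have h1 := HopfAlgebra.mul_antipode_rTensor_comul_apply (R := ℂ) (a := u i j)
    rw [hΔ, map_sum, map_sum] at h1
    simp only [LinearMap.rTensor_tmul, LinearMap.mul'_apply] at h1
    rw [hcounit, Algebra.algebraMap_eq_smul_one] at h1
    exact h1
  have hS : ∀ i j, S (u i j) = star (u j i) := by
    intro i j
    calc S (u i j)
        = ∑ k, S (u i k) * (if k = j then (1:A) else 0) := by simp
      _ = ∑ k, S (u i k) * (∑ l, u k l * star (u j l)) :=
          Finset.sum_congr rfl fun k _ => by rw [hrow]
      _ = ∑ l, (∑ k, S (u i k) * u k l) * star (u j l) := by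
          simp_rw [Finset.mul_sum, Finset.sum_mul, mul_assoc]
          exact Finset.sum_comm
      _ = ∑ l, ((if i = l then (1:ℂ) else 0) • (1:A)) * star (u j l) :=
          Finset.sum_congr rfl fun l _ => by rw [ax1]
      _ = star (u j i) := by simp [ite_smul, ite_mul]
  have hSstar : ∀ i j, S (star (u i j)) = u j i := by
    intro i j
    have := hKac (u j i)
    rwa [hS j i] at this
  -- sT of sums of pure tensors
  have hsT0 : sT 0 = 0 := by
    have := hsT_add 0 0
    rw [add_zero] at this
    exact (left_eq_add.mp this)
  have hsT_sum : ∀ (f g : Fin d → A), sT (∑ k, f k ⊗ₜ[ℂ] g k) = ∑ k, star (f k) ⊗ₜ[ℂ] star (g k) := by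
    intro f g
    have key : ∀ s : Finset (Fin d),
        sT (∑ k ∈ s, f k ⊗ₜ[ℂ] g k) = ∑ k ∈ s, star (f k) ⊗ₜ[ℂ] star (g k) := by
      intro s
      induction s using Finset.induction_on with
      | empty => simpa using hsT0
      | insert _ _ hx ih => rw [Finset.sum_insert hx, Finset.sum_insert hx, hsT_add, hsT_tmul, ih]
    exact key _
  have hΔstar : ∀ i j, Coalgebra.comul (R := ℂ) (star (u i j)) = ∑ k, star (u i k) ⊗ₜ[ℂ] star (u k j) := by
    intro i j
    rw [hcomul_star, hΔ, hsT_sum]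
  have hcounit_star : ∀ i j, Coalgebra.counit (R := ℂ) (star (u i j)) = if i = j then (1:ℂ) else 0 := by
    intro i j
    have h1 := congrArg (Coalgebra.counit (R := ℂ)) (hcol j i)
    rw [map_sum] at h1
    simp only [Bialgebra.counit_mul, hcounit] at h1
    rw [Finset.sum_congr rfl (fun k _ => by rw [mul_ite, mul_one, mul_zero] : ∀ k ∈ Finset.univ, Coalgebra.counit (R := ℂ) (star (u k j)) * (if k = i then (1:ℂ) else 0) = if k = i then Coalgebra.counit (R := ℂ) (star (u k j)) else 0)] at h1
    rw [Finset.sum_ite_eq' Finset.univ i] at h1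
    simp only [Finset.mem_univ, if_true] at h1
    rw [h1]
    by_cases hij : i = j <;> simp [hij, eq_comm]
  have ax2 : ∀ i j, ∑ k, S (star (u i k)) * star (u k j) = (if i = j then (1:ℂ) else 0) • (1:A) := by
    intro i j
    have h1 := HopfAlgebra.mul_antipode_rTensor_comul_apply (R := ℂ) (a := star (u i j))
    rw [hΔstar, map_sum, map_sum] at h1
    simp only [LinearMap.rTensor_tmul, LinearMap.mul'_apply] at h1
    rw [hcounit_star, Algebra.algebraMap_eq_smul_one] at h1
    exact h1
  have ax3 : ∀ i j, ∑ k, star (u i k) * S (star (u k j)) = (if i = j then (1:ℂ) else 0) • (1:A) := by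
    intro i j
    have h1 := HopfAlgebra.mul_antipode_lTensor_comul_apply (R := ℂ) (a := star (u i j))
    rw [hΔstar, map_sum, map_sum] at h1
    simp only [LinearMap.lTensor_tmul, LinearMap.mul'_apply] at h1
    rw [hcounit_star, Algebra.algebraMap_eq_smul_one] at h1
    exact h1
  have hB1 : ∀ i j, ∑ k, u k i * star (u k j) = if i = j then (1:A) else 0 := by
    intro i j
    have h1 := ax2 i j
    rw [Finset.sum_congr rfl (fun k _ => by rw [hSstar])] at h1
    rw [h1]
    split <;> simp
  have hB2 : ∀ i j, ∑ k, star (u i k) * u j k = if i = j then (1:A) else 0 := by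
    intro i j
    have h1 := ax3 i j
    rw [Finset.sum_congr rfl (fun k _ => by rw [hSstar])] at h1
    rw [h1]
    split <;> simp
  -- swap helper
  have swap4 : ∀ (f : Fin d → Fin d → Fin d → Fin d → A),
      (∑ p, ∑ q, ∑ r, ∑ s, f p q r s) = ∑ r, ∑ s, ∑ p, ∑ q, f p q r s := by
    intro f
    calc (∑ p, ∑ q, ∑ r, ∑ s, f p q r s)
        = ∑ p, ∑ r, ∑ q, ∑ s, f p q r s :=
          Finset.sum_congr rfl fun p _ => Finset.sum_comm
      _ = ∑ r, ∑ p, ∑ q, ∑ s, f p q r s := Finset.sum_comm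
      _ = ∑ r, ∑ p, ∑ s, ∑ q, f p q r s :=
          Finset.sum_congr rfl fun r _ => Finset.sum_congr rfl fun p _ => Finset.sum_comm
      _ = ∑ r, ∑ s, ∑ p, ∑ q, f p q r s :=
          Finset.sum_congr rfl fun r _ => Finset.sum_comm
  -- comultiplication of products
  have hΔprod : ∀ m k n l, Coalgebra.comul (R := ℂ) (u m k * star (u n l)) =
      ∑ p, ∑ q, (u m p * star (u n q)) ⊗ₜ[ℂ] (u p k * star (u q l)) := by
    intro m k n l
    rw [Bialgebra.comul_mul, hΔ, hΔstar, Finset.sum_mul_sum]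
    refine Finset.sum_congr rfl fun p _ => Finset.sum_congr rfl fun q _ => ?_
    rw [Algebra.TensorProduct.tmul_mul_tmul]
  have hcounit_prod : ∀ m k n l, Coalgebra.counit (R := ℂ) (u m k * star (u n l)) =
      (if m = k then (1:ℂ) else 0) * (if n = l then (1:ℂ) else 0) := by
    intro m k n l
    rw [Bialgebra.counit_mul, hcounit, hcounit_star]
  -- antipode axioms for products
  have axW2 : ∀ m k n l, (∑ p, ∑ q, (u m p * star (u n q)) * S (u p k * star (u q l))) =
      ((if m = k then (1:ℂ) else 0) * (if n = l then (1:ℂ) else 0)) • (1:A) := by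
    intro m k n l
    have h1 := HopfAlgebra.mul_antipode_lTensor_comul_apply (R := ℂ) (a := u m k * star (u n l))
    rw [hΔprod, map_sum, map_sum] at h1
    simp only [map_sum, LinearMap.lTensor_tmul, LinearMap.mul'_apply] at h1
    rw [hcounit_prod, Algebra.algebraMap_eq_smul_one] at h1
    exact h1
  -- left inverse of W
  have hYW : ∀ m n k l, (∑ p, ∑ q, (u q n * star (u p m)) * (u p k * star (u q l))) =
      ((if m = k then (1:ℂ) else 0) * (if n = l then (1:ℂ) else 0)) • (1:A) := by
    intro m n k l
    rw [Finset.sum_comm]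
    have step : ∀ q, (∑ p, (u q n * star (u p m)) * (u p k * star (u q l))) =
        u q n * ((if m = k then (1:A) else 0) * star (u q l)) := by
      intro q
      rw [← hcol m k, Finset.sum_mul, Finset.mul_sum]
      refine Finset.sum_congr rfl fun p _ => ?_
      simp only [mul_assoc]
    rw [Finset.sum_congr rfl fun q _ => step q]
    by_cases hmk : m = k
    · simp only [hmk, if_true, one_mul]
      rw [hB1]
      split <;> simp
    · simp [hmk]
  -- antipode of products
  have hSprod : ∀ m n k l, S (u m k * star (u n l)) = u l n * star (u k m) := by
    intro m n k l
    calc S (u m k * star (u n l))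
        = ∑ p, ∑ q, (((if m = p then (1:ℂ) else 0) * (if n = q then (1:ℂ) else 0)) • (1:A)) *
            S (u p k * star (u q l)) := by
          simp [ite_mul, ite_smul, Finset.sum_ite_eq]
      _ = ∑ p, ∑ q, (∑ r, ∑ s, (u s n * star (u r m)) * (u r p * star (u s q))) *
            S (u p k * star (u q l)) :=
          Finset.sum_congr rfl fun p _ => Finset.sum_congr rfl fun q _ => by rw [hYW]
      _ = ∑ r, ∑ s, (u s n * star (u r m)) *
            (∑ p, ∑ q, (u r p * star (u s q)) * S (u p k * star (u q l))) := by
          simp_rw [Finset.sum_mul, Finset.mul_sum, mul_assoc]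
          exact swap4 _
      _ = ∑ r, ∑ s, (u s n * star (u r m)) *
            (((if r = k then (1:ℂ) else 0) * (if s = l then (1:ℂ) else 0)) • (1:A)) :=
          Finset.sum_congr rfl fun r _ => Finset.sum_congr rfl fun s _ => by rw [axW2]
      _ = u l n * star (u k m) := by
          simp [ite_mul, mul_ite, ite_smul, Finset.sum_ite_eq]
  -- expansion of σP
  have hσP : σ P = ∑ i, ∑ k, ∑ p, ∑ q, (P i k * P p q) • (u k p * star (u i q)) := by
    rw [hσ]
    refine Finset.sum_congr rfl fun i _ => Finset.sum_congr rfl fun k _ => ?_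
    rw [hα, Finset.smul_sum]
    refine Finset.sum_congr rfl fun p _ => ?_
    rw [Finset.smul_sum]
    refine Finset.sum_congr rfl fun q _ => ?_
    rw [smul_smul]
  have hPconj : ∀ i k, starRingEnd ℂ (P i k) = P k i := by
    intro i k
    have h1 : P.conjTranspose k i = P k i := by rw [hP1]
    rw [Matrix.conjTranspose_apply] at h1
    exact h1
  have swapPairs : ∀ (f : Fin d → Fin d → Fin d → Fin d → A),
      (∑ i, ∑ k, ∑ p, ∑ q, f i k p q) = ∑ i, ∑ k, ∑ p, ∑ q, f k i q p := by
    intro f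
    rw [Finset.sum_comm]
    exact Finset.sum_congr rfl fun _ _ => Finset.sum_congr rfl fun _ _ => Finset.sum_comm
  have selfadj : star (σ P) = σ P := by
    have e1 : star (σ P) = ∑ i, ∑ k, ∑ p, ∑ q, (P k i * P q p) • (u i q * star (u k p)) := by
      rw [hσP, star_sum]
      refine Finset.sum_congr rfl fun i _ => ?_
      rw [star_sum]
      refine Finset.sum_congr rfl fun k _ => ?_
      rw [star_sum]
      refine Finset.sum_congr rfl fun p _ => ?_
      rw [star_sum]
      refine Finset.sum_congr rfl fun q _ => ?_
      rw [hstar_smul, map_mul, hPconj, hPconj, star_mul, star_star]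
    rw [e1, hσP]
    exact swapPairs fun i k p q => (P k i * P q p) • (u i q * star (u k p))
  -- J operator and its properties
  set J : A ⊗[ℂ] A →ₗ[ℂ] A :=
    (TensorProduct.lid ℂ A).toLinearMap ∘ₗ LinearMap.rTensor A h with hJdef
  have hJtmul : ∀ x y : A, J (x ⊗ₜ[ℂ] y) = h x • y := by
    intro x y
    simp [hJdef]
  have hJinv : ∀ y : A, J (Coalgebra.comul (R := ℂ) y) = h y • 1 := by
    intro y
    have := hinvL y
    simpa [hJdef] using this
  have hJright : ∀ (w : A ⊗[ℂ] A) (g : A), J (w * ((1:A) ⊗ₜ[ℂ] g)) = J w * g := by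
    intro w g
    induction w using TensorProduct.induction_on with
    | zero => simp
    | tmul x y => rw [Algebra.TensorProduct.tmul_mul_tmul, mul_one, hJtmul, hJtmul, smul_mul_assoc]
    | add v w hv hw => rw [add_mul, map_add, map_add, hv, hw, add_mul]
  -- the twisted functional
  set hP' : A →ₗ[ℂ] ℂ := (d:ℂ) • (h ∘ₗ LinearMap.mulRight ℂ (σ P)) with hP'def
  have hP'apply : ∀ z : A, hP' z = (d:ℂ) * h (z * σ P) := by
    intro z
    simp [hP'def, smul_eq_mul]
  have hP'star : ∀ x : A, starRingEnd ℂ (hP x) = hP' (star x) := by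
    intro x
    rw [hhP, hP'apply, map_mul, map_natCast]
    congr 1
    rw [← hstar, star_mul, selfadj]
  have hstarlid : ∀ w : A ⊗[ℂ] A,
      star ((TensorProduct.lid ℂ A) ((LinearMap.rTensor A hP) w)) =
      (TensorProduct.lid ℂ A) ((LinearMap.rTensor A hP') (sT w)) := by
    intro w
    induction w using TensorProduct.induction_on with
    | zero => simp [hsT0]
    | tmul x y =>
        rw [hsT_tmul]
        simp only [LinearMap.rTensor_tmul, TensorProduct.lid_tmul]
        rw [hstar_smul, hP'star]
    | add v w hv hw =>
        rw [hsT_add]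
        simp only [map_add, star_add]
        rw [hv, hw]
  have hlidP' : ∀ w : A ⊗[ℂ] A,
      (TensorProduct.lid ℂ A) ((LinearMap.rTensor A hP') w) =
      (d:ℂ) • J (w * ((σ P) ⊗ₜ[ℂ] (1:A))) := by
    intro w
    induction w using TensorProduct.induction_on with
    | zero => simp
    | tmul x y =>
        rw [Algebra.TensorProduct.tmul_mul_tmul, mul_one, hJtmul]
        simp only [LinearMap.rTensor_tmul, TensorProduct.lid_tmul]
        rw [hP'apply, smul_smul]
    | add v w hv hw =>
        rw [add_mul]
        simp only [map_add, smul_add]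
        rw [hv, hw]
  -- second collapse identity
  have hWcol : ∀ t v p q, (∑ r, ∑ s, (u t r * star (u v s)) * (u q s * star (u p r))) =
      ((if t = p then (1:ℂ) else 0) * (if v = q then (1:ℂ) else 0)) • (1:A) := by
    intro t v p q
    have step : ∀ r, (∑ s, (u t r * star (u v s)) * (u q s * star (u p r))) =
        u t r * ((if v = q then (1:A) else 0) * star (u p r)) := by
      intro r
      rw [← hB2 v q, Finset.sum_mul, Finset.mul_sum]
      refine Finset.sum_congr rfl fun s _ => ?_
      simp only [mul_assoc]
    rw [Finset.sum_congr rfl fun r _ => step r]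
    by_cases hvq : v = q
    · simp only [hvq, if_true, one_mul]
      rw [hrow]
      split <;> simp
    · simp [hvq]
  -- swap4 for tensors
  have swap4T : ∀ (f : Fin d → Fin d → Fin d → Fin d → A ⊗[ℂ] A),
      (∑ p, ∑ q, ∑ r, ∑ s, f p q r s) = ∑ r, ∑ s, ∑ p, ∑ q, f p q r s := by
    intro f
    calc (∑ p, ∑ q, ∑ r, ∑ s, f p q r s)
        = ∑ p, ∑ r, ∑ q, ∑ s, f p q r s :=
          Finset.sum_congr rfl fun p _ => Finset.sum_comm
      _ = ∑ r, ∑ p, ∑ q, ∑ s, f p q r s := Finset.sum_comm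
      _ = ∑ r, ∑ p, ∑ s, ∑ q, f p q r s :=
          Finset.sum_congr rfl fun r _ => Finset.sum_congr rfl fun p _ => Finset.sum_comm
      _ = ∑ r, ∑ s, ∑ p, ∑ q, f p q r s :=
          Finset.sum_congr rfl fun r _ => Finset.sum_comm
  -- inner collapse
  have hinner : ∀ i k p q, (∑ r, ∑ s, Coalgebra.comul (R := ℂ) (u k r * star (u i s)) *
        ((1:A) ⊗ₜ[ℂ] S (u r p * star (u s q)))) = (u k p * star (u i q)) ⊗ₜ[ℂ] (1:A) := by
    intro i k p q
    calc (∑ r, ∑ s, Coalgebra.comul (R := ℂ) (u k r * star (u i s)) *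
          ((1:A) ⊗ₜ[ℂ] S (u r p * star (u s q))))
        = ∑ r, ∑ s, ∑ t, ∑ v, (u k t * star (u i v)) ⊗ₜ[ℂ]
            ((u t r * star (u v s)) * (u q s * star (u p r))) := by
          refine Finset.sum_congr rfl fun r _ => Finset.sum_congr rfl fun s _ => ?_
          rw [hΔprod, hSprod, Finset.sum_mul]
          refine Finset.sum_congr rfl fun t _ => ?_
          rw [Finset.sum_mul]
          refine Finset.sum_congr rfl fun v _ => ?_
          rw [Algebra.TensorProduct.tmul_mul_tmul, mul_one]
      _ = ∑ t, ∑ v, (u k t * star (u i v)) ⊗ₜ[ℂ]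
            (∑ r, ∑ s, (u t r * star (u v s)) * (u q s * star (u p r))) := by
          rw [swap4T]
          refine Finset.sum_congr rfl fun t _ => Finset.sum_congr rfl fun v _ => ?_
          rw [TensorProduct.tmul_sum]
          refine Finset.sum_congr rfl fun r _ => ?_
          rw [TensorProduct.tmul_sum]
      _ = ∑ t, ∑ v, (u k t * star (u i v)) ⊗ₜ[ℂ]
            ((((if t = p then (1:ℂ) else 0) * (if v = q then (1:ℂ) else 0))) • (1:A)) :=
          Finset.sum_congr rfl fun t _ => Finset.sum_congr rfl fun v _ => by rw [hWcol]
      _ = (u k p * star (u i q)) ⊗ₜ[ℂ] (1:A) := by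
          have term : ∀ t v, (u k t * star (u i v)) ⊗ₜ[ℂ]
              (((if t = p then (1:ℂ) else 0) * (if v = q then (1:ℂ) else 0)) • (1:A)) =
              if t = p then (if v = q then (u k t * star (u i v)) ⊗ₜ[ℂ] (1:A) else 0) else 0 := by
            intro t v
            by_cases h1 : t = p
            · by_cases h2 : v = q
              · rw [if_pos h1, if_pos h2, if_pos h1, if_pos h2, one_mul, one_smul]
              · rw [if_pos h1, if_neg h2, if_pos h1, if_neg h2, mul_zero, zero_smul,
                  TensorProduct.tmul_zero]
            · rw [if_neg h1, if_neg h1, zero_mul, zero_smul, TensorProduct.tmul_zero]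
          rw [Finset.sum_congr rfl fun t _ => Finset.sum_congr rfl fun v _ => term t v]
          simp only [Finset.sum_ite_irrel, Finset.sum_const_zero, Finset.sum_ite_eq',
            Finset.mem_univ, if_true]
  -- the coassociativity/antipode collapse for σP
  have hCI : (σ P) ⊗ₜ[ℂ] (1:A) = ∑ i, ∑ k, ∑ p, ∑ q, (P i k * P p q) •
      (∑ r, ∑ s, Coalgebra.comul (R := ℂ) (u k r * star (u i s)) *
        ((1:A) ⊗ₜ[ℂ] S (u r p * star (u s q)))) := by
    symm
    calc (∑ i, ∑ k, ∑ p, ∑ q, (P i k * P p q) •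
        (∑ r, ∑ s, Coalgebra.comul (R := ℂ) (u k r * star (u i s)) *
          ((1:A) ⊗ₜ[ℂ] S (u r p * star (u s q)))))
        = ∑ i, ∑ k, ∑ p, ∑ q, (P i k * P p q) • ((u k p * star (u i q)) ⊗ₜ[ℂ] (1:A)) :=
          Finset.sum_congr rfl fun i _ => Finset.sum_congr rfl fun k _ =>
            Finset.sum_congr rfl fun p _ => Finset.sum_congr rfl fun q _ => by rw [hinner]
      _ = (σ P) ⊗ₜ[ℂ] (1:A) := by
          rw [hσP]
          simp_rw [TensorProduct.sum_tmul, TensorProduct.smul_tmul']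
  -- the main convolution computation
  have hMain : ∀ b : A, J (Coalgebra.comul (R := ℂ) b * ((σ P) ⊗ₜ[ℂ] (1:A))) =
      ∑ i, ∑ k, ∑ p, ∑ q, ∑ r, ∑ s,
        ((P i k * P p q) * h (b * u k r * star (u i s))) • (u q s * star (u p r)) := by
    intro b
    rw [hCI]
    simp only [Finset.mul_sum, mul_smul_comm, ← mul_assoc, ← Bialgebra.comul_mul, map_sum,
      map_smul, hJright, hJinv, smul_mul_assoc, one_mul, smul_smul, hSprod,
      Finset.smul_sum]
  -- expansion of the Berezin adjoint entries
  have hσbr' : ∀ (a : A) (m n : Fin d), σbr a m n =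
      ∑ p, ∑ q, ((d:ℂ) * (P p q * h (u q n * star (u p m) * a))) := by
    intro a m n
    rw [hσbr, hα]
    simp only [map_sum, map_smul, hSprod, Finset.sum_mul, smul_mul_assoc, smul_eq_mul,
      Finset.mul_sum]
  -- reindexing of six-fold sums
  have unnest : ∀ (F : Fin d → Fin d → Fin d → Fin d → Fin d → Fin d → A),
      (∑ x : Fin d × Fin d × Fin d × Fin d × Fin d × Fin d,
        F x.1 x.2.1 x.2.2.1 x.2.2.2.1 x.2.2.2.2.1 x.2.2.2.2.2) =
      ∑ i, ∑ k, ∑ m, ∑ n, ∑ p, ∑ q, F i k m n p q := by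
    intro F
    rw [Fintype.sum_prod_type]
    refine Finset.sum_congr rfl fun i _ => ?_
    rw [Fintype.sum_prod_type]
    refine Finset.sum_congr rfl fun k _ => ?_
    rw [Fintype.sum_prod_type]
    refine Finset.sum_congr rfl fun m _ => ?_
    rw [Fintype.sum_prod_type]
    refine Finset.sum_congr rfl fun n _ => ?_
    rw [Fintype.sum_prod_type]
  have reindex : ∀ (F : Fin d → Fin d → Fin d → Fin d → Fin d → Fin d → A),
      (∑ i, ∑ k, ∑ m, ∑ n, ∑ p, ∑ q, F i k m n p q) =
      ∑ i, ∑ k, ∑ p, ∑ q, ∑ r, ∑ s, F q p r s k i := by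
    intro F
    rw [← unnest F, ← unnest (fun i k p q r s => F q p r s k i)]
    exact (Equiv.sum_comp
      (⟨fun x => (x.2.2.2.1, x.2.2.1, x.2.2.2.2.1, x.2.2.2.2.2, x.2.1, x.1),
        fun x => (x.2.2.2.2.2, x.2.2.2.2.1, x.2.1, x.1, x.2.2.1, x.2.2.2.1),
        fun x => rfl, fun x => rfl⟩ : _ ≃ _)
      (fun x : Fin d × Fin d × Fin d × Fin d × Fin d × Fin d =>
        F x.1 x.2.1 x.2.2.1 x.2.2.2.1 x.2.2.2.2.1 x.2.2.2.2.2)).symm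
  -- final assembly
  intro a
  have hL : σ (σbr a) = ∑ i, ∑ k, ∑ m, ∑ n, ∑ p, ∑ q,
      ((P i k * ((d:ℂ) * (P p q * h (u q n * star (u p m) * a)))) • (u k m * star (u i n))) := by
    rw [hσ]
    simp only [hα, hσbr', Finset.smul_sum, Finset.sum_smul, smul_smul]
  have hR : (TensorProduct.lid ℂ A) ((LinearMap.rTensor A hP) (Coalgebra.comul (R := ℂ) a)) =
      ∑ i, ∑ k, ∑ p, ∑ q, ∑ r, ∑ s,
        ((d:ℂ) * ((P k i * P q p) * h (u i s * (star (u k r) * a)))) • (u p r * star (u q s)) := by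
    have e1 : (TensorProduct.lid ℂ A) ((LinearMap.rTensor A hP) (Coalgebra.comul (R := ℂ) a)) =
        star ((TensorProduct.lid ℂ A) ((LinearMap.rTensor A hP')
          (sT (Coalgebra.comul (R := ℂ) a)))) := by
      rw [← hstarlid, star_star]
    rw [e1, ← hcomul_star, hlidP', hMain (star a)]
    simp only [hstar_smul, map_natCast, star_sum, map_mul, hPconj, ← hstar, star_mul,
      star_star, Finset.smul_sum, smul_smul]
  calc σ (σbr a)
      = ∑ i, ∑ k, ∑ m, ∑ n, ∑ p, ∑ q,
          ((P i k * ((d:ℂ) * (P p q * h (u q n * star (u p m) * a)))) •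
            (u k m * star (u i n))) := hL
    _ = ∑ i, ∑ k, ∑ p, ∑ q, ∑ r, ∑ s,
          ((P q p * ((d:ℂ) * (P k i * h (u i s * star (u k r) * a)))) •
            (u p r * star (u q s))) :=
        reindex fun i k m n p q =>
          (P i k * ((d:ℂ) * (P p q * h (u q n * star (u p m) * a)))) • (u k m * star (u i n))
    _ = ∑ i, ∑ k, ∑ p, ∑ q, ∑ r, ∑ s,
          ((d:ℂ) * ((P k i * P q p) * h (u i s * (star (u k r) * a)))) •
            (u p r * star (u q s)) := by
        refine Finset.sum_congr rfl fun i _ => Finset.sum_congr rfl fun k _ =>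
          Finset.sum_congr rfl fun p _ => Finset.sum_congr rfl fun q _ =>
          Finset.sum_congr rfl fun r _ => Finset.sum_congr rfl fun s _ => ?_
        rw [mul_assoc (u i s)]
        congr 1
        ring
    _ = (TensorProduct.lid ℂ A) ((LinearMap.rTensor A hP) (Coalgebra.comul (R := ℂ) a)) :=
        hR.symm
end

section
/- Let A be a unital C*-algebra and h : A → ℂ a positive unital tracial linear functional: h(1) = 1, h(a★a) ≥ 0 for all a, and h(ab) = h(ba) for all a, b. Let γ ∈ (0,1), let s ∈ A with 0 ≤ s ≤ 1, and let p, q ∈ A be self-adjoint idempotents (p = p★ = p², q = q★ = q²) that commute with s and satisfy s·(1−q) ≤ (1−γ)·(1−q), s·p ≥ (1−γ/2)·p, and h(p) > 0. Then for every a ∈ A and every n ∈ ℕ: |h(sⁿ·(1−q)·a)| ≤ ‖a‖·(1−γ)ⁿ, h(sⁿ) ≥ (1−γ/2)ⁿ·h(p) > 0, and hence |h(sⁿ·(1−q)·a)| / h(sⁿ) ≤ (‖a‖ / h(p)) · ((1−γ)/(1−γ/2))ⁿ. -/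
open scoped ComplexOrder

/-- The concentration estimate: in a unital C*-algebra `A` with a positive
unital tracial functional `h`, given `γ ∈ (0,1)`, `0 ≤ s ≤ 1`, and commuting self-adjoint
idempotents `p, q` with `s(1−q) ≤ (1−γ)(1−q)`, `sp ≥ (1−γ/2)p` and `h(p) > 0`, one has for all
`a ∈ A` and `n ∈ ℕ`: `|h(sⁿ(1−q)a)| ≤ ‖a‖(1−γ)ⁿ`, `h(sⁿ) ≥ (1−γ/2)ⁿ h(p) > 0`, and
`|h(sⁿ(1−q)a)|/h(sⁿ) ≤ (‖a‖/h(p))·((1−γ)/(1−γ/2))ⁿ`. -/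
theorem stmt16
    (A : Type*) [CStarAlgebra A] [PartialOrder A] [StarOrderedRing A]
    (h : A →ₗ[ℂ] ℂ) (hh1 : h 1 = 1)
    (hpos : ∀ a : A, 0 ≤ h (star a * a))
    (htr : ∀ a b : A, h (a * b) = h (b * a))
    (γ : ℝ) (hγ0 : 0 < γ) (hγ1 : γ < 1)
    (s : A) (hs0 : 0 ≤ s) (hs1 : s ≤ 1)
    (p q : A)
    (hpsa : star p = p) (hpidem : p * p = p)
    (hqsa : star q = q) (hqidem : q * q = q)
    (hpcomm : p * s = s * p) (hqcomm : q * s = s * q)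
    (hsq : s * (1 - q) ≤ ((1 - γ : ℝ) : ℂ) • (1 - q))
    (hsp : ((1 - γ / 2 : ℝ) : ℂ) • p ≤ s * p)
    (hhp : 0 < h p) :
    ∀ (a : A) (n : ℕ),
      ‖h (s ^ n * (1 - q) * a)‖ ≤ ‖a‖ * (1 - γ) ^ n ∧
      ((1 - γ / 2) ^ n * (h p).re ≤ (h (s ^ n)).re ∧ 0 < (h (s ^ n)).re) ∧
      ‖h (s ^ n * (1 - q) * a)‖ / (h (s ^ n)).re ≤
        (‖a‖ / (h p).re) * ((1 - γ) / (1 - γ / 2)) ^ n := by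
  -- h is nonneg on nonneg elements
  have hmono0 : ∀ x : A, 0 ≤ x → 0 ≤ h x := by
    intro x hx
    have hsa : IsSelfAdjoint (CFC.sqrt x) := .of_nonneg (CFC.sqrt_nonneg x)
    have hx' : CFC.sqrt x * CFC.sqrt x = x := by
      rw [← sq, CFC.sq_sqrt x hx]
    calc (0:ℂ) ≤ h (star (CFC.sqrt x) * CFC.sqrt x) := hpos _
      _ = h x := by rw [hsa.star_eq, hx']
  have hmono : ∀ x y : A, x ≤ y → h x ≤ h y := by
    intro x y hxy
    have := hmono0 (y - x) (by rwa [sub_nonneg])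
    rw [map_sub] at this
    exact sub_nonneg.mp this
  -- trace positivity trick : h (x * y) ≥ 0 for x, y ≥ 0
  have htpos : ∀ x y : A, 0 ≤ x → 0 ≤ y → 0 ≤ h (x * y) := by
    intro x y hx hy
    set c := CFC.sqrt x with hc
    have hcsa : IsSelfAdjoint c := .of_nonneg (CFC.sqrt_nonneg x)
    have hcc : c * c = x := by rw [hc, ← sq, CFC.sq_sqrt x hx]
    have h1 : x * y = c * ((c * y)) := by rw [← mul_assoc, hcc]
    have h2 : (0:A) ≤ c * y * c := hcsa.conjugate_nonneg hy
    calc (0:ℂ) ≤ h (c * y * c) := hmono0 _ h2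
      _ = h (x * y) := by rw [h1, htr c (c * y), mul_assoc]
  -- h of real scalars
  have halg : ∀ r : ℝ, h (algebraMap ℝ A r) = (r : ℂ) := by
    intro r
    have : algebraMap ℝ A r = (r : ℂ) • (1 : A) := by
      rw [Algebra.algebraMap_eq_smul_one]
      simp [Complex.coe_smul]
    rw [this, map_smul, hh1, smul_eq_mul, mul_one]
  -- h is real on selfadjoint elements
  have hreal : ∀ b : A, IsSelfAdjoint b → (h b).im = 0 := by
    intro b hb
    have h1 : -b ≤ algebraMap ℝ A ‖-b‖ := hb.neg.le_algebraMap_norm_self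
    have h2 : (0:A) ≤ b + algebraMap ℝ A ‖b‖ := by
      rw [norm_neg] at h1
      have := neg_le_iff_add_nonneg.mp h1
      rwa [add_comm] at this
    have h3 := hmono0 _ h2
    rw [map_add, halg] at h3
    have := h3.2
    simpa using this.symm
  -- star property of h
  have hstar : ∀ a : A, h (star a) = (starRingEnd ℂ) (h a) := by
    intro a
    have hu : IsSelfAdjoint (a + star a) := by
      rw [IsSelfAdjoint, star_add, star_star, add_comm]
    have hv : IsSelfAdjoint (Complex.I • (star a - a)) := by
      rw [IsSelfAdjoint, star_smul, star_sub, star_star, Complex.star_def,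
        Complex.conj_I, neg_smul, ← smul_neg, neg_sub]
    have h1 := hreal _ hu
    have h2 := hreal _ hv
    rw [map_add] at h1
    rw [map_smul, map_sub, smul_eq_mul] at h2
    simp only [Complex.add_im, Complex.mul_im, Complex.I_re, Complex.I_im,
      Complex.sub_re, Complex.sub_im] at h1 h2
    apply Complex.ext <;> simp [Complex.conj_re, Complex.conj_im] <;> linarith
  -- Cauchy-Schwarz
  letI core : PreInnerProductSpace.Core ℂ A :=
  { inner := fun x y => h (star x * y)
    conj_inner_symm := by
      intro x y
      show (starRingEnd ℂ) (h (star y * x)) = h (star x * y)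
      rw [← hstar, star_mul, star_star]
    re_inner_nonneg := by
      intro x
      simpa using (Complex.le_def.mp (hpos x)).1
    add_left := by
      intro x y z
      simp [star_add, add_mul]
    smul_left := by
      intro x y r
      simp only [star_smul, smul_mul_assoc, map_smul, Complex.star_def, smul_eq_mul] }
  letI : Inner ℂ A := InnerProductSpace.Core.toPreInner'
  have CS : ∀ x y : A, ‖h (star x * y)‖ ^ 2 ≤ (h (star x * x)).re * (h (star y * y)).re := by
    intro x y
    have h1 := InnerProductSpace.Core.inner_mul_inner_self_le (𝕜 := ℂ) (F := A) x y
    have h2 : (inner ℂ y x : ℂ) = (starRingEnd ℂ) (inner ℂ x y : ℂ) := (core.conj_inner_symm y x).symm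
    rw [h2, RCLike.norm_conj] at h1
    calc ‖h (star x * y)‖ ^ 2 = ‖(inner ℂ x y : ℂ)‖ * ‖(inner ℂ x y : ℂ)‖ := by rw [sq]; rfl
      _ ≤ RCLike.re (inner ℂ x x : ℂ) * RCLike.re (inner ℂ y y : ℂ) := h1
      _ = (h (star x * x)).re * (h (star y * y)).re := rfl
  -- basic positivity facts
  have hγ2 : (0:ℝ) < 1 - γ / 2 := by linarith
  have hγ1' : (0:ℝ) ≤ 1 - γ := by linarith
  have hqnn : (0:A) ≤ q := by
    have := star_mul_self_nonneg q
    rwa [hqsa, hqidem] at this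
  have e1q : (1 - q) * (1 - q) = 1 - q := by
    rw [sub_mul, one_mul, mul_sub, mul_one, hqidem]
    abel
  have e1p : (1 - p) * (1 - p) = 1 - p := by
    rw [sub_mul, one_mul, mul_sub, mul_one, hpidem]
    abel
  have h1q : (0:A) ≤ 1 - q := by
    have := star_mul_self_nonneg (1 - q)
    rwa [star_sub, star_one, hqsa, e1q] at this
  have h1p : (0:A) ≤ 1 - p := by
    have := star_mul_self_nonneg (1 - p)
    rwa [star_sub, star_one, hpsa, e1p] at this
  have hqsn : ∀ n : ℕ, (1 - q) * s ^ n = s ^ n * (1 - q) := by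
    intro n
    exact (((Commute.one_left s).sub_left (hqcomm : Commute q s)).pow_right n).eq
  have hsnn : ∀ n : ℕ, (0:A) ≤ s ^ n := fun n => CStarAlgebra.pow_nonneg hs0 n
  -- first induction : h (sᵏ(1-q)) ≤ (1-γ)ᵏ
  have key1 : ∀ k : ℕ, h (s ^ k * (1 - q)) ≤ (((1 - γ) ^ k : ℝ) : ℂ) := by
    intro k
    induction k with
    | zero =>
      have h0 : (0:ℂ) ≤ h q := hmono0 q hqnn
      simp only [pow_zero, one_mul, Complex.ofReal_one, map_sub, hh1]
      exact sub_le_self _ h0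
    | succ k ih =>
      have hy : (0:A) ≤ ((1 - γ : ℝ) : ℂ) • (1 - q) - s * (1 - q) := sub_nonneg.mpr hsq
      have h0 := htpos _ _ (hsnn k) hy
      have hexp : s ^ k * (((1 - γ : ℝ) : ℂ) • (1 - q) - s * (1 - q)) =
          ((1 - γ : ℝ) : ℂ) • (s ^ k * (1 - q)) - s ^ (k + 1) * (1 - q) := by
        rw [mul_sub, mul_smul_comm, ← mul_assoc, ← pow_succ]
      rw [hexp, map_sub, map_smul, sub_nonneg, smul_eq_mul] at h0
      calc h (s ^ (k + 1) * (1 - q)) ≤ ((1 - γ : ℝ) : ℂ) * h (s ^ k * (1 - q)) := h0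
        _ ≤ ((1 - γ : ℝ) : ℂ) * (((1 - γ) ^ k : ℝ) : ℂ) :=
            mul_le_mul_of_nonneg_left ih (Complex.zero_le_real.mpr hγ1')
        _ = (((1 - γ) ^ (k + 1) : ℝ) : ℂ) := by push_cast; ring
  -- second induction : (1-γ/2)ⁿ h p ≤ h (sⁿ p)
  have key2 : ∀ n : ℕ, (((1 - γ / 2) ^ n : ℝ) : ℂ) * h p ≤ h (s ^ n * p) := by
    intro n
    induction n with
    | zero => simp
    | succ n ih =>
      have hy : (0:A) ≤ s * p - ((1 - γ / 2 : ℝ) : ℂ) • p := sub_nonneg.mpr hsp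
      have h0 := htpos _ _ (hsnn n) hy
      have hexp : s ^ n * (s * p - ((1 - γ / 2 : ℝ) : ℂ) • p) =
          s ^ (n + 1) * p - ((1 - γ / 2 : ℝ) : ℂ) • (s ^ n * p) := by
        rw [mul_sub, mul_smul_comm, ← mul_assoc, ← pow_succ]
      rw [hexp, map_sub, map_smul, sub_nonneg, smul_eq_mul] at h0
      calc (((1 - γ / 2) ^ (n + 1) : ℝ) : ℂ) * h p
          = ((1 - γ / 2 : ℝ) : ℂ) * ((((1 - γ / 2) ^ n : ℝ) : ℂ) * h p) := by push_cast; ring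
        _ ≤ ((1 - γ / 2 : ℝ) : ℂ) * h (s ^ n * p) :=
            mul_le_mul_of_nonneg_left ih (Complex.zero_le_real.mpr hγ2.le)
        _ ≤ h (s ^ (n + 1) * p) := h0
  have hsnp : ∀ n : ℕ, h (s ^ n * p) ≤ h (s ^ n) := by
    intro n
    have h0 := htpos _ _ (hsnn n) h1p
    rw [mul_sub, mul_one, map_sub, sub_nonneg] at h0
    exact h0
  have hPre : 0 < (h p).re := (Complex.lt_def.mp hhp).1
  intro a n
  -- part 2
  have part2a : (1 - γ / 2) ^ n * (h p).re ≤ (h (s ^ n)).re := by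
    have := (key2 n).trans (hsnp n)
    have hre := (Complex.le_def.mp this).1
    rwa [Complex.re_ofReal_mul] at hre
  have part2b : 0 < (h (s ^ n)).re :=
    lt_of_lt_of_le (by positivity) part2a
  -- part 1
  have hsan : IsSelfAdjoint (s ^ n) := (IsSelfAdjoint.of_nonneg hs0).pow n
  set b := s ^ n * (1 - q) with hb
  have hstarb : star b = (1 - q) * s ^ n := by
    rw [hb, star_mul, star_sub, star_one, hqsa, hsan.star_eq]
  have hbb : b * star b = s ^ (n + n) * (1 - q) := by
    rw [hstarb, hb, mul_assoc, ← mul_assoc (1 - q), e1q, hqsn n, ← mul_assoc, ← pow_add]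
  have part1 : ‖h (s ^ n * (1 - q) * a)‖ ≤ ‖a‖ * (1 - γ) ^ n := by
    have hcs := CS (star b) a
    rw [star_star] at hcs
    have hb1 : (h (b * star b)).re ≤ (1 - γ) ^ (n + n) := by
      have := (Complex.le_def.mp (hbb ▸ key1 (n + n))).1
      rwa [Complex.ofReal_re] at this
    have hb2 : (h (star a * a)).re ≤ ‖a‖ * ‖a‖ := by
      have hsa2 : IsSelfAdjoint (star a * a) := IsSelfAdjoint.star_mul_self a
      have h1 := hmono _ _ hsa2.le_algebraMap_norm_self
      rw [halg] at h1
      have h2 := (Complex.le_def.mp h1).1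
      simp only [Complex.ofReal_re] at h2
      calc (h (star a * a)).re ≤ ‖star a * a‖ := h2
        _ ≤ ‖star a‖ * ‖a‖ := norm_mul_le _ _
        _ = ‖a‖ * ‖a‖ := by rw [norm_star]
    have hsq2 : ‖h (b * a)‖ ^ 2 ≤ (‖a‖ * (1 - γ) ^ n) ^ 2 := by
      calc ‖h (b * a)‖ ^ 2 ≤ (h (b * star b)).re * (h (star a * a)).re := hcs
        _ ≤ (1 - γ) ^ (n + n) * (‖a‖ * ‖a‖) := by
            refine mul_le_mul hb1 hb2 ?_ (by positivity)
            have := (Complex.le_def.mp (hpos a)).1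
            simpa using this
        _ = (‖a‖ * (1 - γ) ^ n) ^ 2 := by rw [pow_add]; ring
    exact (pow_le_pow_iff_left₀ (norm_nonneg _) (by positivity) two_ne_zero).mp hsq2
  refine ⟨part1, ⟨part2a, part2b⟩, ?_⟩
  -- part 3
  have hden : 0 < (1 - γ / 2) ^ n * (h p).re := by positivity
  have hnum : 0 ≤ ‖h (s ^ n * (1 - q) * a)‖ := norm_nonneg _
  have hstep : ‖h (s ^ n * (1 - q) * a)‖ / (h (s ^ n)).re ≤
      (‖a‖ * (1 - γ) ^ n) / ((1 - γ / 2) ^ n * (h p).re) :=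
    div_le_div₀ (by positivity) part1 hden part2a
  refine hstep.trans (le_of_eq ?_)
  rw [div_pow]
  field_simp
end

section
/- Let X be a compact Hausdorff topological space, x₀ ∈ X, and δ > 0. Let F be a subset of C(X, ℝ) that is totally bounded for the supremum norm and such that every g ∈ F satisfies g ≥ 0 and g(x₀) = 0. Then there exists a continuous function f : X → ℝ with f ≥ 0, f(x₀) ≤ δ, and g(x) ≤ f(x) for every g ∈ F and every x ∈ X. -/
/-- On a compact Hausdorff space `X`, given a point `x₀`, `δ > 0`, and a
totally bounded family `F` of continuous nonnegative functions vanishing at `x₀`, there is a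
continuous nonnegative function `f` with `f x₀ ≤ δ` dominating every member of `F`. -/
theorem stmt17
    (X : Type*) [TopologicalSpace X] [CompactSpace X] [T2Space X]
    (x₀ : X) (δ : ℝ) (hδ : 0 < δ)
    (F : Set C(X, ℝ)) (hFtb : TotallyBounded F)
    (hFpos : ∀ g ∈ F, ∀ x, 0 ≤ g x) (hFzero : ∀ g ∈ F, g x₀ = 0) :
    ∃ f : C(X, ℝ), (∀ x, 0 ≤ f x) ∧ f x₀ ≤ δ ∧ ∀ g ∈ F, ∀ x, g x ≤ f x := by
  obtain ⟨t, htF, htfin, hcov⟩ := hFtb.exists_subset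
    (Metric.dist_mem_uniformity (show (0:ℝ) < δ/2 by linarith))
  classical
  set s : Finset C(X, ℝ) := htfin.toFinset with hs
  refine ⟨⟨fun x => (∑ g ∈ s, g x) + δ/2, by
    exact (continuous_finset_sum s (fun g _ => g.continuous)).add continuous_const⟩,
    ?_, ?_, ?_⟩
  · intro x
    have : 0 ≤ ∑ g ∈ s, g x := Finset.sum_nonneg fun g hg => by
      exact hFpos g (htF (htfin.mem_toFinset.mp hg)) x
    simp only [ContinuousMap.coe_mk]
    linarith
  · have : ∑ g ∈ s, g x₀ = 0 := Finset.sum_eq_zero fun g hg =>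
      hFzero g (htF (htfin.mem_toFinset.mp hg))
    simp only [ContinuousMap.coe_mk, this]
    linarith
  · intro g hg x
    obtain ⟨g', hg', hd⟩ := Set.mem_iUnion₂.mp (hcov hg)
    have hd : dist g g' < δ/2 := hd
    have hx : g x - g' x ≤ δ/2 := by
      have := ContinuousMap.dist_apply_le_dist (f := g) (g := g') x
      have : |g x - g' x| ≤ dist g g' := by
        simpa [Real.dist_eq] using this
      calc g x - g' x ≤ |g x - g' x| := le_abs_self _
        _ ≤ dist g g' := this
        _ ≤ δ/2 := hd.le
    have hmem : g' ∈ s := htfin.mem_toFinset.mpr hg'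
    have hsum : g' x ≤ ∑ h ∈ s, h x :=
      Finset.single_le_sum (fun h hh => hFpos h (htF (htfin.mem_toFinset.mp hh)) x) hmem
    simp only [ContinuousMap.coe_mk]
    linarith
end

section
/- Let A be a Hopf algebra over ℂ with comultiplication Δ, counit ε and antipode S satisfying S ∘ S = id, and let h : A → ℂ be a two-sided invariant unital functional: h(1) = 1, (id ⊗ h)(Δ a) = h(a)·1 and (h ⊗ id)(Δ a) = h(a)·1 for all a. Let B be a complex vector space with a (right) corepresentation α : B → B ⊗ A ((α ⊗ id) ∘ α = (id ⊗ Δ) ∘ α and (id ⊗ ε) ∘ α = id), with adjoint α† : B ⊗ A → B defined by α†(ξ ⊗ a) = (id ⊗ h)( ((id ⊗ S)(α(ξ))) · (1 ⊗ a) ), and let N be a complex vector space with a left corepresentation π : N → A ⊗ N ((id ⊗ π) ∘ π = (Δ ⊗ id) ∘ π and (ε ⊗ id) ∘ π = id). Define E = (α† ⊗ id_N) ∘ (id_B ⊗ π) : B ⊗ N → B ⊗ N and M = { ω ∈ B ⊗ N : (α ⊗ id_N)(ω) = (id_B ⊗ π)(ω) in B ⊗ A ⊗ N }. Then (α ⊗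 id_N) ∘ E = (id_B ⊗ π) ∘ E, so E maps B ⊗ N into M; E(ω) = ω for every ω ∈ M; and consequently E is an idempotent linear map whose range is exactly M. -/
open scoped TensorProduct
open TensorProduct LinearMap Coalgebra HopfAlgebra
section
variable {A : Type*} [Semiring A] [Bialgebra ℂ A] {C : Type*} [Semiring C] [Algebra ℂ C]

noncomputable def conv (f g : A →ₗ[ℂ] C) : A →ₗ[ℂ] C :=
  LinearMap.mul' ℂ C ∘ₗ TensorProduct.map f g ∘ₗ Coalgebra.comul

lemma conv_repr (f g : A →ₗ[ℂ] C) {a : A} (r : Coalgebra.Repr ℂ a (A × A)) :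
    conv f g a = ∑ i ∈ r.index, f (r.left i) * g (r.right i) := by
  simp only [conv, LinearMap.comp_apply, ← r.eq, map_sum, TensorProduct.map_tmul,
    LinearMap.mul'_apply]

lemma conv_assoc (f g k : A →ₗ[ℂ] C) : conv (conv f g) k = conv f (conv g k) := by
  ext a
  set r := Coalgebra.Repr.arbitrary ℂ a with hr
  set a₁ : ∀ i : A × A, Coalgebra.Repr ℂ (r.left i) (A × A) := fun i => Coalgebra.Repr.arbitrary ℂ (r.left i)
  set a₂ : ∀ i : A × A, Coalgebra.Repr ℂ (r.right i) (A × A) := fun i => Coalgebra.Repr.arbitrary ℂ (r.right i)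
  have key := Coalgebra.sum_tmul_tmul_eq r a₁ a₂
  have key2 := congrArg (LinearMap.mul' ℂ C ∘ₗ LinearMap.lTensor C (LinearMap.mul' ℂ C) ∘ₗ
    TensorProduct.map f (TensorProduct.map g k)) key
  simp only [map_sum, LinearMap.comp_apply, TensorProduct.map_tmul, LinearMap.lTensor_tmul,
    LinearMap.mul'_apply] at key2
  rw [conv_repr _ _ r, conv_repr _ _ r]
  calc ∑ i ∈ r.index, conv f g (r.left i) * k (r.right i)
      = ∑ i ∈ r.index, ∑ j ∈ (a₁ i).index,
          f ((a₁ i).left j) * (g ((a₁ i).right j) * k (r.right i)) := by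
        refine Finset.sum_congr rfl fun i _ => ?_
        rw [conv_repr _ _ (a₁ i), Finset.sum_mul]
        simp [mul_assoc]
    _ = ∑ i ∈ r.index, ∑ j ∈ (a₂ i).index,
          f (r.left i) * (g ((a₂ i).left j) * k ((a₂ i).right j)) := key2
    _ = ∑ i ∈ r.index, f (r.left i) * conv g k (r.right i) := by
        refine Finset.sum_congr rfl fun i _ => ?_
        rw [conv_repr _ _ (a₂ i), Finset.mul_sum]

noncomputable def cunit : A →ₗ[ℂ] C := Algebra.linearMap ℂ C ∘ₗ Coalgebra.counit

lemma conv_cunit_right (f : A →ₗ[ℂ] C) : conv f cunit = f := by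
  ext a
  set r := Coalgebra.Repr.arbitrary ℂ a with hr
  have key := Coalgebra.sum_map_tmul_counit_eq (R := ℂ) f a (repr := r)
  have key2 := congrArg (TensorProduct.rid ℂ C) key
  simp only [map_sum, TensorProduct.rid_tmul, one_smul] at key2
  rw [conv_repr _ _ r]
  calc ∑ i ∈ r.index, f (r.left i) * cunit (r.right i)
      = ∑ i ∈ r.index, Coalgebra.counit (R := ℂ) (r.right i) • f (r.left i) := by
        refine Finset.sum_congr rfl fun i _ => ?_
        simp [cunit, Algebra.algebraMap_eq_smul_one, mul_smul_comm]
    _ = f a := key2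

lemma conv_cunit_left (f : A →ₗ[ℂ] C) : conv cunit f = f := by
  ext a
  set r := Coalgebra.Repr.arbitrary ℂ a with hr
  have key := Coalgebra.sum_counit_tmul_map_eq (R := ℂ) f a (repr := r)
  have key2 := congrArg (TensorProduct.lid ℂ C) key
  simp only [map_sum, TensorProduct.lid_tmul, one_smul] at key2
  rw [conv_repr _ _ r]
  calc ∑ i ∈ r.index, cunit (r.left i) * f (r.right i)
      = ∑ i ∈ r.index, Coalgebra.counit (R := ℂ) (r.left i) • f (r.right i) := by
        refine Finset.sum_congr rfl fun i _ => ?_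
        simp [cunit, Algebra.algebraMap_eq_smul_one, smul_mul_assoc]
    _ = f a := key2
end


section
variable {A : Type*} [Semiring A] [HopfAlgebra ℂ A]
noncomputable def Tmap (A : Type*) [Semiring A] [HopfAlgebra ℂ A] : A →ₗ[ℂ] A ⊗[ℂ] A :=
  TensorProduct.map (antipode (R := ℂ)) (antipode (R := ℂ)) ∘ₗ
    (TensorProduct.comm ℂ A A).toLinearMap ∘ₗ Coalgebra.comul
lemma Tmap_repr {a : A} (r : Coalgebra.Repr ℂ a (A × A)) :
    Tmap A a = ∑ i ∈ r.index,
      antipode (R := ℂ) (r.right i) ⊗ₜ[ℂ] antipode (R := ℂ) (r.left i) := by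
  simp only [Tmap, LinearMap.comp_apply, ← r.eq, map_sum, LinearEquiv.coe_coe,
    TensorProduct.comm_tmul, TensorProduct.map_tmul]

/-- the contraction map `a ⊗ (b ⊗ (c ⊗ d)) ↦ a S(d) ⊗ b S(c)` -/
noncomputable def Wmap (A : Type*) [Semiring A] [HopfAlgebra ℂ A] :
    A ⊗[ℂ] (A ⊗[ℂ] (A ⊗[ℂ] A)) →ₗ[ℂ] A ⊗[ℂ] A :=
  TensorProduct.map (LinearMap.mul' ℂ A) (LinearMap.mul' ℂ A) ∘ₗ
    (TensorProduct.tensorTensorTensorComm ℂ A A A A).toLinearMap ∘ₗ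
    TensorProduct.map LinearMap.id
      (TensorProduct.map (antipode (R := ℂ)) (antipode (R := ℂ)) ∘ₗ
        (TensorProduct.comm ℂ A A).toLinearMap) ∘ₗ
    (TensorProduct.assoc ℂ A A (A ⊗[ℂ] A)).symm.toLinearMap

@[simp] lemma Wmap_tmul (a b c d : A) :
    Wmap A (a ⊗ₜ[ℂ] (b ⊗ₜ[ℂ] (c ⊗ₜ[ℂ] d))) =
      (a * antipode (R := ℂ) d) ⊗ₜ[ℂ] (b * antipode (R := ℂ) c) := by
  simp [Wmap, TensorProduct.tensorTensorTensorComm_tmul]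

lemma conv_D_T : conv (Coalgebra.comul (R := ℂ) (A := A)) (Tmap A) = cunit := by
  ext a
  set r := Coalgebra.Repr.arbitrary ℂ a with hrdef
  set e : ∀ i : A × A, Coalgebra.Repr ℂ (r.left i) (A × A) := fun i => Coalgebra.Repr.arbitrary ℂ _
  set p : ∀ i : A × A, Coalgebra.Repr ℂ (r.right i) (A × A) := fun i => Coalgebra.Repr.arbitrary ℂ _
  set m : ∀ (i : A × A) (j : A × A), Coalgebra.Repr ℂ ((p i).left j) (A × A) :=
    fun i j => Coalgebra.Repr.arbitrary ℂ _
  set q : ∀ (i : A × A) (j : A × A), Coalgebra.Repr ℂ ((p i).right j) (A × A) :=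
    fun i j => Coalgebra.Repr.arbitrary ℂ _
  -- four-fold coassociativity: form I = form II
  have T1 := Coalgebra.sum_tmul_tmul_eq r e p
  have T2 := congrArg (LinearMap.lTensor A (LinearMap.lTensor A (Coalgebra.comul (R := ℂ)))) T1
  simp only [map_sum, LinearMap.lTensor_tmul] at T2
  -- expand Δ((p i).right j) resp. Δ(r.right i) inside T2
  have T2' : (∑ i ∈ r.index, ∑ j ∈ (e i).index, ∑ k ∈ (p i).index,
        (e i).left j ⊗ₜ[ℂ] ((e i).right j ⊗ₜ[ℂ] ((p i).left k ⊗ₜ[ℂ] (p i).right k)))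
      = ∑ i ∈ r.index, ∑ j ∈ (p i).index, ∑ k ∈ (q i j).index,
        r.left i ⊗ₜ[ℂ] ((p i).left j ⊗ₜ[ℂ] ((q i j).left k ⊗ₜ[ℂ] (q i j).right k)) := by
    calc (∑ i ∈ r.index, ∑ j ∈ (e i).index, ∑ k ∈ (p i).index,
          (e i).left j ⊗ₜ[ℂ] ((e i).right j ⊗ₜ[ℂ] ((p i).left k ⊗ₜ[ℂ] (p i).right k)))
        = ∑ i ∈ r.index, ∑ j ∈ (e i).index,
            (e i).left j ⊗ₜ[ℂ] ((e i).right j ⊗ₜ[ℂ] Coalgebra.comul (R := ℂ) (r.right i)) := by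
          refine Finset.sum_congr rfl fun i _ => Finset.sum_congr rfl fun j _ => ?_
          rw [← (p i).eq]
          simp [TensorProduct.tmul_sum]
      _ = ∑ i ∈ r.index, ∑ j ∈ (p i).index,
            r.left i ⊗ₜ[ℂ] ((p i).left j ⊗ₜ[ℂ] Coalgebra.comul (R := ℂ) ((p i).right j)) := T2
      _ = _ := by
          refine Finset.sum_congr rfl fun i _ => Finset.sum_congr rfl fun j _ => ?_
          rw [← (q i j).eq]
          simp [TensorProduct.tmul_sum]
  -- form II = form III
  have T3 : (∑ i ∈ r.index, ∑ j ∈ (p i).index, ∑ k ∈ (q i j).index,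
        r.left i ⊗ₜ[ℂ] ((p i).left j ⊗ₜ[ℂ] ((q i j).left k ⊗ₜ[ℂ] (q i j).right k)))
      = ∑ i ∈ r.index, ∑ j ∈ (p i).index, ∑ k ∈ (m i j).index,
        r.left i ⊗ₜ[ℂ] ((m i j).left k ⊗ₜ[ℂ] ((m i j).right k ⊗ₜ[ℂ] (p i).right j)) := by
    refine Finset.sum_congr rfl fun i _ => ?_
    have t := Coalgebra.sum_tmul_tmul_eq (p i) (m i) (q i)
    have t2 := congrArg (TensorProduct.mk ℂ A (A ⊗[ℂ] (A ⊗[ℂ] A)) (r.left i)) t.symm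
    simpa [map_sum] using t2
  have E4 := T2'.trans T3
  have key := congrArg (Wmap A) E4
  simp only [map_sum, Wmap_tmul] at key
  -- identify LHS with `conv comul Tmap a`
  rw [conv_repr _ _ r]
  have lhs_eq : ∑ i ∈ r.index,
      Coalgebra.comul (R := ℂ) (r.left i) * Tmap A (r.right i)
      = ∑ i ∈ r.index, ∑ j ∈ (e i).index, ∑ k ∈ (p i).index,
          ((e i).left j * antipode (R := ℂ) ((p i).right k)) ⊗ₜ[ℂ]
            ((e i).right j * antipode (R := ℂ) ((p i).left k)) := by
    refine Finset.sum_congr rfl fun i _ => ?_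
    rw [← (e i).eq, Tmap_repr (p i), Finset.sum_mul_sum]
    exact Finset.sum_congr rfl fun j _ => Finset.sum_congr rfl fun k _ => by
      rw [Algebra.TensorProduct.tmul_mul_tmul]
  rw [lhs_eq, key]
  -- now contract the right-hand side
  calc ∑ i ∈ r.index, ∑ j ∈ (p i).index, ∑ k ∈ (m i j).index,
        (r.left i * antipode (R := ℂ) ((p i).right j)) ⊗ₜ[ℂ]
          ((m i j).left k * antipode (R := ℂ) ((m i j).right k))
      = ∑ i ∈ r.index, ∑ j ∈ (p i).index,
          Coalgebra.counit (R := ℂ) ((p i).left j) •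
            ((r.left i * antipode (R := ℂ) ((p i).right j)) ⊗ₜ[ℂ] (1 : A)) := by
        refine Finset.sum_congr rfl fun i _ => Finset.sum_congr rfl fun j _ => ?_
        rw [← TensorProduct.tmul_sum, HopfAlgebra.sum_mul_antipode_eq_smul (m i j),
          TensorProduct.tmul_smul]
    _ = ∑ i ∈ r.index, (r.left i * antipode (R := ℂ) (r.right i)) ⊗ₜ[ℂ] (1 : A) := by
        refine Finset.sum_congr rfl fun i _ => ?_
        have hc : ∑ j ∈ (p i).index,
            Coalgebra.counit (R := ℂ) ((p i).left j) • (p i).right j = r.right i := by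
          have h0 := congrArg (TensorProduct.lid ℂ A) (Coalgebra.sum_counit_tmul_eq (p i))
          simp only [map_sum, TensorProduct.lid_tmul, one_smul] at h0
          exact h0
        have hmain : ∑ j ∈ (p i).index, Coalgebra.counit (R := ℂ) ((p i).left j) •
            (r.left i * antipode (R := ℂ) ((p i).right j)) =
              r.left i * antipode (R := ℂ) (r.right i) := by
          calc ∑ j ∈ (p i).index, Coalgebra.counit (R := ℂ) ((p i).left j) •
              (r.left i * antipode (R := ℂ) ((p i).right j))
              = ∑ j ∈ (p i).index, r.left i *
                  antipode (R := ℂ) (Coalgebra.counit (R := ℂ) ((p i).left j) • (p i).right j) := by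
                refine Finset.sum_congr rfl fun j _ => ?_
                rw [map_smul, mul_smul_comm]
            _ = r.left i * antipode (R := ℂ) (∑ j ∈ (p i).index,
                  Coalgebra.counit (R := ℂ) ((p i).left j) • (p i).right j) := by
                rw [map_sum, Finset.mul_sum]
            _ = _ := by rw [hc]
        calc ∑ j ∈ (p i).index, Coalgebra.counit (R := ℂ) ((p i).left j) •
              ((r.left i * antipode (R := ℂ) ((p i).right j)) ⊗ₜ[ℂ] (1 : A))
            = (∑ j ∈ (p i).index, Coalgebra.counit (R := ℂ) ((p i).left j) •
                (r.left i * antipode (R := ℂ) ((p i).right j))) ⊗ₜ[ℂ] (1 : A) := by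
              rw [TensorProduct.sum_tmul]
              exact Finset.sum_congr rfl fun j _ => by rw [TensorProduct.smul_tmul']
          _ = _ := by rw [hmain]
    _ = cunit a := by
        rw [← TensorProduct.sum_tmul, HopfAlgebra.sum_mul_antipode_eq_smul r,
          ← TensorProduct.smul_tmul']
        simp [cunit, Algebra.algebraMap_eq_smul_one, Algebra.TensorProduct.one_def]

lemma conv_DS_D :
    conv (Coalgebra.comul ∘ₗ antipode (R := ℂ) (A := A)) Coalgebra.comul = cunit := by
  ext a
  set r := Coalgebra.Repr.arbitrary ℂ a with hr
  rw [conv_repr _ _ r]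
  calc ∑ i ∈ r.index, (Coalgebra.comul ∘ₗ antipode (R := ℂ)) (r.left i) *
          Coalgebra.comul (R := ℂ) (r.right i)
      = Coalgebra.comul (R := ℂ) (∑ i ∈ r.index, antipode (R := ℂ) (r.left i) * r.right i) := by
        rw [map_sum]
        exact Finset.sum_congr rfl fun i _ => by
          simp [Bialgebra.comul_mul]
    _ = cunit a := by
        rw [HopfAlgebra.sum_antipode_mul_eq_smul, map_smul, Bialgebra.comul_one]
        simp [cunit, Algebra.algebraMap_eq_smul_one]


lemma comul_antipode_eq :
    Coalgebra.comul ∘ₗ antipode (R := ℂ) (A := A) = Tmap A := by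
  have h1 : conv (Coalgebra.comul ∘ₗ antipode (R := ℂ) (A := A)) Coalgebra.comul = cunit :=
    conv_DS_D
  have h2 : conv (Coalgebra.comul (R := ℂ) (A := A)) (Tmap A) = cunit := conv_D_T
  calc Coalgebra.comul ∘ₗ antipode (R := ℂ) (A := A)
      = conv (Coalgebra.comul ∘ₗ antipode (R := ℂ) (A := A)) cunit := (conv_cunit_right _).symm
    _ = conv (Coalgebra.comul ∘ₗ antipode (R := ℂ) (A := A))
        (conv (Coalgebra.comul (R := ℂ)) (Tmap A)) := by rw [h2]
    _ = conv (conv (Coalgebra.comul ∘ₗ antipode (R := ℂ) (A := A))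
        (Coalgebra.comul (R := ℂ))) (Tmap A) := (conv_assoc _ _ _).symm
    _ = conv cunit (Tmap A) := by rw [h1]
    _ = Tmap A := conv_cunit_left _

lemma comul_antipode_repr {d : A} (r : Coalgebra.Repr ℂ d (A × A)) :
    Coalgebra.comul (R := ℂ) (antipode (R := ℂ) d) =
      ∑ i ∈ r.index, antipode (R := ℂ) (r.right i) ⊗ₜ[ℂ] antipode (R := ℂ) (r.left i) := by
  have := LinearMap.congr_fun (comul_antipode_eq (A := A)) d
  rw [LinearMap.comp_apply] at this
  rw [this, Tmap_repr r]
end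
section
variable {A : Type*} [Semiring A] [HopfAlgebra ℂ A]

noncomputable def theta (h : A →ₗ[ℂ] ℂ) (a : A) : A →ₗ[ℂ] A :=
  (TensorProduct.lid ℂ A).toLinearMap ∘ₗ LinearMap.rTensor A h ∘ₗ
    LinearMap.mulRight ℂ (Coalgebra.comul (R := ℂ) a) ∘ₗ
    ((TensorProduct.mk ℂ A A).flip 1) ∘ₗ antipode (R := ℂ)

lemma theta_apply (h : A →ₗ[ℂ] ℂ) {a : A} (ra : Coalgebra.Repr ℂ a (A × A)) (c : A) :
    theta h a c = ∑ k ∈ ra.index, h (antipode (R := ℂ) c * ra.left k) • ra.right k := by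
  simp only [theta, LinearMap.comp_apply, LinearEquiv.coe_coe, LinearMap.flip_apply,
    TensorProduct.mk_apply, LinearMap.mulRight_apply]
  rw [← ra.eq, Finset.mul_sum]
  simp only [Algebra.TensorProduct.tmul_mul_tmul, one_mul, map_sum, LinearMap.rTensor_tmul,
    TensorProduct.lid_tmul]

lemma lemK2 (h : A →ₗ[ℂ] ℂ)
    (hinvL : ∀ a : A,
      (TensorProduct.lid ℂ A) ((LinearMap.rTensor A h) (Coalgebra.comul (R := ℂ) a)) =
        h a • (1 : A))
    {a d : A} (ra : Coalgebra.Repr ℂ a (A × A)) (rd : Coalgebra.Repr ℂ d (A × A)) :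
    ∑ m ∈ rd.index, antipode (R := ℂ) (rd.left m) * theta h a (rd.right m)
      = h (antipode (R := ℂ) d * a) • (1 : A) := by
  have hcm : Coalgebra.comul (R := ℂ) (antipode (R := ℂ) d * a) =
      ∑ m ∈ rd.index, ∑ k ∈ ra.index,
        (antipode (R := ℂ) (rd.right m) * ra.left k) ⊗ₜ[ℂ]
          (antipode (R := ℂ) (rd.left m) * ra.right k) := by
    rw [Bialgebra.comul_mul, comul_antipode_repr rd, ← ra.eq, Finset.sum_mul_sum]
    exact Finset.sum_congr rfl fun m _ => Finset.sum_congr rfl fun k _ => by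
      rw [Algebra.TensorProduct.tmul_mul_tmul]
  have hres := hinvL (antipode (R := ℂ) d * a)
  rw [hcm] at hres
  simp only [map_sum, LinearMap.rTensor_tmul, TensorProduct.lid_tmul] at hres
  rw [← hres]
  refine Finset.sum_congr rfl fun m _ => ?_
  rw [theta_apply h ra, Finset.mul_sum]
  exact Finset.sum_congr rfl fun k _ => by rw [mul_smul_comm]

lemma lemK (h : A →ₗ[ℂ] ℂ)
    (hinvL : ∀ a : A,
      (TensorProduct.lid ℂ A) ((LinearMap.rTensor A h) (Coalgebra.comul (R := ℂ) a)) =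
        h a • (1 : A))
    {c a : A} (rc : Coalgebra.Repr ℂ c (A × A)) (ra : Coalgebra.Repr ℂ a (A × A)) :
    ∑ j ∈ rc.index, h (antipode (R := ℂ) (rc.right j) * a) • rc.left j
      = ∑ k ∈ ra.index, h (antipode (R := ℂ) c * ra.left k) • ra.right k := by
  set re : ∀ j : A × A, Coalgebra.Repr ℂ (rc.left j) (A × A) := fun j => Coalgebra.Repr.arbitrary ℂ _
  set rd : ∀ j : A × A, Coalgebra.Repr ℂ (rc.right j) (A × A) := fun j => Coalgebra.Repr.arbitrary ℂ _
  have hc0 : ∑ j ∈ rc.index,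
      Coalgebra.counit (R := ℂ) (rc.left j) • rc.right j = c := by
    have h0 := congrArg (TensorProduct.lid ℂ A) (Coalgebra.sum_counit_tmul_eq rc)
    simp only [map_sum, TensorProduct.lid_tmul, one_smul] at h0
    exact h0
  have J : (∑ j ∈ rc.index, ∑ m ∈ (re j).index,
      ((re j).left m * antipode (R := ℂ) ((re j).right m)) ⊗ₜ[ℂ] rc.right j)
        = (1 : A) ⊗ₜ[ℂ] c := by
    calc ∑ j ∈ rc.index, ∑ m ∈ (re j).index,
          ((re j).left m * antipode (R := ℂ) ((re j).right m)) ⊗ₜ[ℂ] rc.right j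
        = ∑ j ∈ rc.index,
            (Coalgebra.counit (R := ℂ) (rc.left j) • (1 : A)) ⊗ₜ[ℂ] rc.right j := by
          refine Finset.sum_congr rfl fun j _ => ?_
          rw [← TensorProduct.sum_tmul, HopfAlgebra.sum_mul_antipode_eq_smul (re j)]
      _ = (1 : A) ⊗ₜ[ℂ] (∑ j ∈ rc.index,
            Coalgebra.counit (R := ℂ) (rc.left j) • rc.right j) := by
          rw [TensorProduct.tmul_sum]
          exact Finset.sum_congr rfl fun j _ => TensorProduct.smul_tmul _ _ _
      _ = (1 : A) ⊗ₜ[ℂ] c := by rw [hc0]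
  have hΨ := congrArg (LinearMap.mul' ℂ A ∘ₗ LinearMap.lTensor A (theta h a)) J
  simp only [map_sum, LinearMap.comp_apply, LinearMap.lTensor_tmul, LinearMap.mul'_apply,
    one_mul] at hΨ
  have T := Coalgebra.sum_tmul_tmul_eq rc re rd
  have hΛ := congrArg (LinearMap.mul' ℂ A ∘ₗ LinearMap.lTensor A (LinearMap.mul' ℂ A ∘ₗ
    TensorProduct.map (antipode (R := ℂ)) (theta h a))) T
  simp only [map_sum, LinearMap.comp_apply, LinearMap.lTensor_tmul, TensorProduct.map_tmul,
    LinearMap.mul'_apply] at hΛ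
  calc ∑ j ∈ rc.index, h (antipode (R := ℂ) (rc.right j) * a) • rc.left j
      = ∑ j ∈ rc.index, rc.left j *
          (∑ m ∈ (rd j).index, antipode (R := ℂ) ((rd j).left m) *
            theta h a ((rd j).right m)) := by
        refine Finset.sum_congr rfl fun j _ => ?_
        rw [lemK2 h hinvL ra (rd j), mul_smul_comm, mul_one]
    _ = ∑ j ∈ rc.index, ∑ m ∈ (rd j).index, rc.left j *
          (antipode (R := ℂ) ((rd j).left m) * theta h a ((rd j).right m)) := by
        exact Finset.sum_congr rfl fun j _ => Finset.mul_sum _ _ _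
    _ = ∑ j ∈ rc.index, ∑ m ∈ (re j).index, (re j).left m *
          (antipode (R := ℂ) ((re j).right m) * theta h a (rc.right j)) := hΛ.symm
    _ = ∑ j ∈ rc.index, ∑ m ∈ (re j).index,
          ((re j).left m * antipode (R := ℂ) ((re j).right m)) * theta h a (rc.right j) := by
        simp [mul_assoc]
    _ = theta h a c := hΨ
    _ = ∑ k ∈ ra.index, h (antipode (R := ℂ) c * ra.left k) • ra.right k :=
        theta_apply h ra c
end
section
variable {A : Type*} [Semiring A] [HopfAlgebra ℂ A]
variable {B : Type*} [AddCommGroup B] [Module ℂ B]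

lemma alphadag_repr (h : A →ₗ[ℂ] ℂ) (α : B →ₗ[ℂ] B ⊗[ℂ] A) (αdag : B ⊗[ℂ] A →ₗ[ℂ] B)
    (hαdag : ∀ (ξ : B) (a : A),
      αdag (ξ ⊗ₜ[ℂ] a) =
        (TensorProduct.rid ℂ B) ((LinearMap.lTensor B h)
          ((LinearMap.lTensor B (LinearMap.mulRight ℂ a))
            ((LinearMap.lTensor B (HopfAlgebra.antipode (R := ℂ))) (α ξ)))))
    (ξ : B) (a : A) {s : Finset (B × A)} (hs : α ξ = ∑ t ∈ s, t.1 ⊗ₜ[ℂ] t.2) :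
    αdag (ξ ⊗ₜ[ℂ] a) = ∑ t ∈ s, h (antipode (R := ℂ) t.2 * a) • t.1 := by
  rw [hαdag ξ a, hs]
  simp only [map_sum, LinearMap.lTensor_tmul, LinearMap.mulRight_apply,
    TensorProduct.rid_tmul]

lemma lemA (h : A →ₗ[ℂ] ℂ) (hh1 : h 1 = 1)
    (α : B →ₗ[ℂ] B ⊗[ℂ] A)
    (hαcoassoc : ∀ ξ : B,
      (TensorProduct.assoc ℂ B A A) ((LinearMap.rTensor A α) (α ξ)) =
        (LinearMap.lTensor B (Coalgebra.comul (R := ℂ))) (α ξ))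
    (hαcounit : ∀ ξ : B,
      (TensorProduct.rid ℂ B) ((LinearMap.lTensor B (Coalgebra.counit (R := ℂ))) (α ξ)) = ξ)
    (αdag : B ⊗[ℂ] A →ₗ[ℂ] B)
    (hαdag : ∀ (ξ : B) (a : A),
      αdag (ξ ⊗ₜ[ℂ] a) =
        (TensorProduct.rid ℂ B) ((LinearMap.lTensor B h)
          ((LinearMap.lTensor B (LinearMap.mulRight ℂ a))
            ((LinearMap.lTensor B (HopfAlgebra.antipode (R := ℂ))) (α ξ)))))
    (ξ : B) : αdag (α ξ) = ξ := by
  obtain ⟨s, hs⟩ := TensorProduct.exists_finset (R := ℂ) (α ξ)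
  set g : A ⊗[ℂ] A →ₗ[ℂ] ℂ :=
    h ∘ₗ LinearMap.mul' ℂ A ∘ₗ LinearMap.rTensor A (antipode (R := ℂ)) with hg
  set Θ : (B ⊗[ℂ] A) ⊗[ℂ] A →ₗ[ℂ] B :=
    (TensorProduct.rid ℂ B).toLinearMap ∘ₗ LinearMap.lTensor B g ∘ₗ
      (TensorProduct.assoc ℂ B A A).toLinearMap with hΘdef
  have hΘsymm : ∀ (b : B) (u : A ⊗[ℂ] A),
      Θ ((TensorProduct.assoc ℂ B A A).symm (b ⊗ₜ[ℂ] u)) = g u • b := by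
    intro b u
    simp only [hΘdef, LinearMap.comp_apply, LinearEquiv.coe_coe,
      LinearEquiv.apply_symm_apply, LinearMap.lTensor_tmul, TensorProduct.rid_tmul]
  have hΘ : ∀ (ξ' : B) (c : A), Θ (α ξ' ⊗ₜ[ℂ] c) = αdag (ξ' ⊗ₜ[ℂ] c) := by
    intro ξ' c
    obtain ⟨s', hs'⟩ := TensorProduct.exists_finset (R := ℂ) (α ξ')
    rw [alphadag_repr h α αdag hαdag ξ' c hs', hs', TensorProduct.sum_tmul]
    simp only [map_sum, hΘdef, hg, LinearMap.comp_apply, LinearEquiv.coe_coe,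
      TensorProduct.assoc_tmul, LinearMap.lTensor_tmul, LinearMap.rTensor_tmul,
      LinearMap.mul'_apply, TensorProduct.rid_tmul]
  have hco : (LinearMap.rTensor A α) (α ξ) =
      (TensorProduct.assoc ℂ B A A).symm
        ((LinearMap.lTensor B (Coalgebra.comul (R := ℂ))) (α ξ)) := by
    rw [← hαcoassoc ξ, LinearEquiv.symm_apply_apply]
  calc αdag (α ξ)
      = ∑ t ∈ s, αdag (t.1 ⊗ₜ[ℂ] t.2) := by rw [hs, map_sum]
    _ = ∑ t ∈ s, Θ (α t.1 ⊗ₜ[ℂ] t.2) := Finset.sum_congr rfl fun t _ => (hΘ t.1 t.2).symm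
    _ = Θ ((LinearMap.rTensor A α) (α ξ)) := by
        rw [hs]; simp only [map_sum, LinearMap.rTensor_tmul]
    _ = Θ ((TensorProduct.assoc ℂ B A A).symm
        ((LinearMap.lTensor B (Coalgebra.comul (R := ℂ))) (α ξ))) := by rw [hco]
    _ = ∑ t ∈ s, g (Coalgebra.comul (R := ℂ) t.2) • t.1 := by
        rw [hs]
        simp only [map_sum, LinearMap.lTensor_tmul]
        exact Finset.sum_congr rfl fun t _ => hΘsymm t.1 _
    _ = ∑ t ∈ s, Coalgebra.counit (R := ℂ) t.2 • t.1 := by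
        refine Finset.sum_congr rfl fun t _ => ?_
        rw [hg]
        simp only [LinearMap.comp_apply]
        rw [HopfAlgebra.mul_antipode_rTensor_comul_apply]
        simp [Algebra.algebraMap_eq_smul_one, hh1]
    _ = ξ := by
        have := hαcounit ξ
        rw [hs] at this
        simpa only [map_sum, LinearMap.lTensor_tmul, TensorProduct.rid_tmul] using this

lemma lemB (h : A →ₗ[ℂ] ℂ)
    (hinvL : ∀ a : A,
      (TensorProduct.lid ℂ A) ((LinearMap.rTensor A h) (Coalgebra.comul (R := ℂ) a)) =
        h a • (1 : A))
    (α : B →ₗ[ℂ] B ⊗[ℂ] A)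
    (hαcoassoc : ∀ ξ : B,
      (TensorProduct.assoc ℂ B A A) ((LinearMap.rTensor A α) (α ξ)) =
        (LinearMap.lTensor B (Coalgebra.comul (R := ℂ))) (α ξ))
    (αdag : B ⊗[ℂ] A →ₗ[ℂ] B)
    (hαdag : ∀ (ξ : B) (a : A),
      αdag (ξ ⊗ₜ[ℂ] a) =
        (TensorProduct.rid ℂ B) ((LinearMap.lTensor B h)
          ((LinearMap.lTensor B (LinearMap.mulRight ℂ a))
            ((LinearMap.lTensor B (HopfAlgebra.antipode (R := ℂ))) (α ξ)))))
    (ξ : B) (a : A) :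
    α (αdag (ξ ⊗ₜ[ℂ] a)) =
      (LinearMap.rTensor A αdag)
        ((TensorProduct.assoc ℂ B A A).symm (ξ ⊗ₜ[ℂ] Coalgebra.comul (R := ℂ) a)) := by
  obtain ⟨s, hs⟩ := TensorProduct.exists_finset (R := ℂ) (α ξ)
  set ra := Coalgebra.Repr.arbitrary ℂ a with hra
  set Φ : (B ⊗[ℂ] A) ⊗[ℂ] A →ₗ[ℂ] B ⊗[ℂ] A :=
    (TensorProduct.rid ℂ (B ⊗[ℂ] A)).toLinearMap ∘ₗ
      LinearMap.lTensor (B ⊗[ℂ] A)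
        (h ∘ₗ LinearMap.mulRight ℂ a ∘ₗ antipode (R := ℂ)) with hΦdef
  have hΦ : ∀ (w : B ⊗[ℂ] A) (d : A),
      Φ (w ⊗ₜ[ℂ] d) = h (antipode (R := ℂ) d * a) • w := by
    intro w d
    simp only [hΦdef, LinearMap.comp_apply, LinearMap.lTensor_tmul, LinearEquiv.coe_coe,
      TensorProduct.rid_tmul, LinearMap.mulRight_apply]
  have hco : (LinearMap.rTensor A α) (α ξ) =
      (TensorProduct.assoc ℂ B A A).symm
        ((LinearMap.lTensor B (Coalgebra.comul (R := ℂ))) (α ξ)) := by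
    rw [← hαcoassoc ξ, LinearEquiv.symm_apply_apply]
  -- LHS
  have hL : α (αdag (ξ ⊗ₜ[ℂ] a)) =
      ∑ t ∈ s, t.1 ⊗ₜ[ℂ] (∑ k ∈ ra.index,
        h (antipode (R := ℂ) t.2 * ra.left k) • ra.right k) := by
    calc α (αdag (ξ ⊗ₜ[ℂ] a))
        = ∑ t ∈ s, h (antipode (R := ℂ) t.2 * a) • α t.1 := by
          rw [alphadag_repr h α αdag hαdag ξ a hs, map_sum]
          exact Finset.sum_congr rfl fun t _ => map_smul α _ _
      _ = Φ ((LinearMap.rTensor A α) (α ξ)) := by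
          rw [hs]
          simp only [map_sum, LinearMap.rTensor_tmul]
          exact Finset.sum_congr rfl fun t _ => (hΦ (α t.1) t.2).symm
      _ = Φ ((TensorProduct.assoc ℂ B A A).symm
            ((LinearMap.lTensor B (Coalgebra.comul (R := ℂ))) (α ξ))) := by rw [hco]
      _ = ∑ t ∈ s, t.1 ⊗ₜ[ℂ] (∑ j ∈ (Coalgebra.Repr.arbitrary ℂ t.2).index,
            h (antipode (R := ℂ) ((Coalgebra.Repr.arbitrary ℂ t.2).right j) * a) •
              (Coalgebra.Repr.arbitrary ℂ t.2).left j) := by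
          rw [hs]
          simp only [map_sum, LinearMap.lTensor_tmul]
          refine Finset.sum_congr rfl fun t _ => ?_
          rw [← (Coalgebra.Repr.arbitrary ℂ t.2).eq, TensorProduct.tmul_sum, map_sum, map_sum]
          rw [TensorProduct.tmul_sum]
          refine Finset.sum_congr rfl fun j _ => ?_
          rw [TensorProduct.assoc_symm_tmul, hΦ, TensorProduct.tmul_smul]
      _ = _ := by
          refine Finset.sum_congr rfl fun t _ => ?_
          rw [lemK h hinvL (Coalgebra.Repr.arbitrary ℂ t.2) ra]
  -- RHS
  have hR : (LinearMap.rTensor A αdag)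
      ((TensorProduct.assoc ℂ B A A).symm (ξ ⊗ₜ[ℂ] Coalgebra.comul (R := ℂ) a)) =
      ∑ t ∈ s, t.1 ⊗ₜ[ℂ] (∑ k ∈ ra.index,
        h (antipode (R := ℂ) t.2 * ra.left k) • ra.right k) := by
    rw [← ra.eq, TensorProduct.tmul_sum, map_sum, map_sum]
    calc ∑ k ∈ ra.index, (LinearMap.rTensor A αdag)
          ((TensorProduct.assoc ℂ B A A).symm (ξ ⊗ₜ[ℂ] (ra.left k ⊗ₜ[ℂ] ra.right k)))
        = ∑ k ∈ ra.index, ∑ t ∈ s,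
            (h (antipode (R := ℂ) t.2 * ra.left k) • t.1) ⊗ₜ[ℂ] ra.right k := by
          refine Finset.sum_congr rfl fun k _ => ?_
          rw [TensorProduct.assoc_symm_tmul, LinearMap.rTensor_tmul,
            alphadag_repr h α αdag hαdag ξ (ra.left k) hs, TensorProduct.sum_tmul]
      _ = ∑ t ∈ s, ∑ k ∈ ra.index,
            t.1 ⊗ₜ[ℂ] (h (antipode (R := ℂ) t.2 * ra.left k) • ra.right k) := by
          rw [Finset.sum_comm]
          exact Finset.sum_congr rfl fun t _ => Finset.sum_congr rfl fun k _ =>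
            TensorProduct.smul_tmul _ _ _
      _ = _ := by
          exact Finset.sum_congr rfl fun t _ => (TensorProduct.tmul_sum _ _ _).symm
  rw [hL, hR]
end

/-- Let `A` be a Hopf algebra over ℂ with involutive antipode and a
two-sided invariant unital functional `h`, let `α : B → B ⊗ A` be a right corepresentation
with adjoint `α†(ξ ⊗ a) = (id ⊗ h)(((id ⊗ S)(α ξ))(1 ⊗ a))`, and let `π : N → A ⊗ N` be a
left corepresentation.  Then `E = (α† ⊗ id) ∘ (id ⊗ π)` maps `B ⊗ N` into
`M = { ω : (α ⊗ id)ω = (id ⊗ π)ω }`, fixes `M`, and is an idempotent with range exactly `M`. -/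
theorem stmt18
    (A : Type*) [Semiring A] [HopfAlgebra ℂ A]
    (hKac : ∀ a : A, HopfAlgebra.antipode (R := ℂ) (HopfAlgebra.antipode (R := ℂ) a) = a)
    (h : A →ₗ[ℂ] ℂ) (hh1 : h 1 = 1)
    (hinvR : ∀ a : A,
      (TensorProduct.rid ℂ A) ((LinearMap.lTensor A h) (Coalgebra.comul (R := ℂ) a)) =
        h a • (1 : A))
    (hinvL : ∀ a : A,
      (TensorProduct.lid ℂ A) ((LinearMap.rTensor A h) (Coalgebra.comul (R := ℂ) a)) =
        h a • (1 : A))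
    (B : Type*) [AddCommGroup B] [Module ℂ B]
    (α : B →ₗ[ℂ] B ⊗[ℂ] A)
    (hαcoassoc : ∀ ξ : B,
      (TensorProduct.assoc ℂ B A A) ((LinearMap.rTensor A α) (α ξ)) =
        (LinearMap.lTensor B (Coalgebra.comul (R := ℂ))) (α ξ))
    (hαcounit : ∀ ξ : B,
      (TensorProduct.rid ℂ B) ((LinearMap.lTensor B (Coalgebra.counit (R := ℂ))) (α ξ)) = ξ)
    (αdag : B ⊗[ℂ] A →ₗ[ℂ] B)
    (hαdag : ∀ (ξ : B) (a : A),
      αdag (ξ ⊗ₜ[ℂ] a) =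
        (TensorProduct.rid ℂ B) ((LinearMap.lTensor B h)
          ((LinearMap.lTensor B (LinearMap.mulRight ℂ a))
            ((LinearMap.lTensor B (HopfAlgebra.antipode (R := ℂ))) (α ξ)))))
    (N : Type*) [AddCommGroup N] [Module ℂ N]
    (π : N →ₗ[ℂ] A ⊗[ℂ] N)
    (hπcoassoc : ∀ x : N,
      (LinearMap.lTensor A π) (π x) =
        (TensorProduct.assoc ℂ A A N) ((LinearMap.rTensor N (Coalgebra.comul (R := ℂ))) (π x)))
    (hπcounit : ∀ x : N,
      (TensorProduct.lid ℂ N) ((LinearMap.rTensor N (Coalgebra.counit (R := ℂ))) (π x)) = x) :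
    let E : B ⊗[ℂ] N → B ⊗[ℂ] N := fun ω =>
      (LinearMap.rTensor N αdag)
        ((TensorProduct.assoc ℂ B A N).symm ((LinearMap.lTensor B π) ω));
    let M : Set (B ⊗[ℂ] N) := {ω |
      (LinearMap.rTensor N α) ω =
        (TensorProduct.assoc ℂ B A N).symm ((LinearMap.lTensor B π) ω)};
    (∀ ω : B ⊗[ℂ] N, E ω ∈ M) ∧
    (∀ ω ∈ M, E ω = ω) ∧
    (∀ ω : B ⊗[ℂ] N, E (E ω) = E ω) ∧
    Set.range E = M := by
  intro E M
  have hK : ∀ (ξ : B) (x : N),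
      (LinearMap.rTensor N α) (E (ξ ⊗ₜ[ℂ] x)) =
        (TensorProduct.assoc ℂ B A N).symm ((LinearMap.lTensor B π) (E (ξ ⊗ₜ[ℂ] x))) := by
    intro ξ x
    show (LinearMap.rTensor N α) ((LinearMap.rTensor N αdag)
        ((TensorProduct.assoc ℂ B A N).symm ((LinearMap.lTensor B π) (ξ ⊗ₜ[ℂ] x)))) =
      (TensorProduct.assoc ℂ B A N).symm ((LinearMap.lTensor B π)
        ((LinearMap.rTensor N αdag)
          ((TensorProduct.assoc ℂ B A N).symm ((LinearMap.lTensor B π) (ξ ⊗ₜ[ℂ] x)))))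
    obtain ⟨s, hs⟩ := TensorProduct.exists_finset (R := ℂ) (π x)
    rw [LinearMap.lTensor_tmul, hs]
    simp only [TensorProduct.tmul_sum, map_sum, TensorProduct.assoc_symm_tmul,
      LinearMap.rTensor_tmul, LinearMap.lTensor_tmul]
    -- goal : ∑ t in s, α (αdag (ξ ⊗ t.1)) ⊗ t.2
    --      = ∑ t in s, assoc.symm (αdag (ξ ⊗ t.1) ⊗ π t.2)
    have h1 : (∑ t ∈ s, t.1 ⊗ₜ[ℂ] π t.2) =
        (TensorProduct.assoc ℂ A A N)
          ((LinearMap.rTensor N (Coalgebra.comul (R := ℂ)))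
            (∑ t ∈ s, t.1 ⊗ₜ[ℂ] t.2)) := by
      have h0 := hπcoassoc x
      rw [hs] at h0
      simpa only [map_sum, LinearMap.lTensor_tmul] using h0
    have h2 := congrArg (fun z => (TensorProduct.assoc ℂ B A N).symm
      ((LinearMap.rTensor (A ⊗[ℂ] N) (αdag ∘ₗ TensorProduct.mk ℂ B A ξ)) z)) h1
    simp only [map_sum, LinearMap.rTensor_tmul, LinearMap.comp_apply,
      TensorProduct.mk_apply] at h2
    -- h2 : ∑ t, assoc.symm (αdag (ξ ⊗ t.1) ⊗ π t.2)
    --    = assoc.symm (rTensor (αdag∘mk ξ) (assoc (∑ t, Δ t.1 ⊗ t.2)))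
    rw [h2]
    refine Finset.sum_congr rfl fun t _ => ?_
    -- LHS : α (αdag (ξ ⊗ t.1)) ⊗ t.2
    rw [lemB h hinvL α hαcoassoc αdag hαdag ξ t.1]
    set rt := Coalgebra.Repr.arbitrary ℂ t.1 with hrt
    rw [← rt.eq]
    simp only [TensorProduct.tmul_sum, map_sum, TensorProduct.sum_tmul,
      TensorProduct.assoc_symm_tmul, TensorProduct.assoc_tmul, LinearMap.rTensor_tmul,
      LinearMap.comp_apply, TensorProduct.mk_apply]
  have part1 : ∀ ω : B ⊗[ℂ] N, E ω ∈ M := by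
    intro ω
    show (LinearMap.rTensor N α) (E ω) =
      (TensorProduct.assoc ℂ B A N).symm ((LinearMap.lTensor B π) (E ω))
    induction ω using TensorProduct.induction_on with
    | zero => show (LinearMap.rTensor N α) (E 0) = _; simp [E]
    | tmul ξ x => exact hK ξ x
    | add x y hx hy =>
      have hExy : E (x + y) = E x + E y := by simp [E, map_add]
      rw [hExy, map_add, map_add, map_add, hx, hy]
  have part2 : ∀ ω ∈ M, E ω = ω := by
    intro ω hω
    have hm : (LinearMap.rTensor N α) ω =
        (TensorProduct.assoc ℂ B A N).symm ((LinearMap.lTensor B π) ω) := hω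
    show (LinearMap.rTensor N αdag)
        ((TensorProduct.assoc ℂ B A N).symm ((LinearMap.lTensor B π) ω)) = ω
    rw [← hm, ← LinearMap.comp_apply, ← LinearMap.rTensor_comp]
    have hid : αdag ∘ₗ α = LinearMap.id :=
      LinearMap.ext (lemA h hh1 α hαcoassoc hαcounit αdag hαdag)
    rw [hid, LinearMap.rTensor_id, LinearMap.id_apply]
  refine ⟨part1, part2, fun ω => part2 _ (part1 ω), ?_⟩
  ext ω
  constructor
  · rintro ⟨ω', rfl⟩; exact part1 ω'
  · intro hω; exact ⟨ω, part2 ω hω⟩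
end

section
/- Let k be a field, let A be a bialgebra over k with comultiplication Δ_A, counit ε_A and unit 1_A ≠ 0, let B be a coalgebra over k with counit ε_B which is also a unital k-algebra with unit 1_B, and let Π : A → B be a k-linear map with Π(1_A) = 1_B and ε_B ∘ Π = ε_A. Let N be a k-vector space with a left corepresentation α : N → B ⊗ N of B ((id ⊗ α) ∘ α = (Δ_B ⊗ id) ∘ α and (ε_B ⊗ id) ∘ α = id_N). Suppose ζ ∈ A ⊗ N satisfies the induction condition (id_A ⊗ Π ⊗ id_N)((Δ_A ⊗ id_N)(ζ)) = (id_A ⊗ α)(ζ) and the invariance condition (Δ_A ⊗ id_N)(ζ) = 1_A ⊗ ζ. Then ζ = 1_A ⊗ ν, where ν = (ε_A ⊗ id_N)(ζ), and ν is α-invariant: α(ν) = 1_B ⊗ ν. -/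
open scoped TensorProduct

/-- Let `A` be a bialgebra over a field `k` with `1_A ≠ 0`, `B` a coalgebra
which is also a unital algebra, `Φ : A → B` a unital counit-preserving linear map, and
`α : N → B ⊗ N` a corepresentation of `B`.  If `ζ ∈ A ⊗ N` satisfies the induction condition
`(id ⊗ Φ ⊗ id)((Δ_A ⊗ id)ζ) = (id ⊗ α)ζ` and the invariance condition `(Δ_A ⊗ id)ζ = 1_A ⊗ ζ`,
then `ζ = 1_A ⊗ ν` with `ν = (ε_A ⊗ id)ζ`, and `ν` is `α`-invariant: `α ν = 1_B ⊗ ν`. -/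
theorem stmt19
    (k A B : Type*) [Field k]
    [Ring A] [Bialgebra k A] (hA : (1 : A) ≠ 0)
    [Ring B] [Algebra k B] [Coalgebra k B]
    (Φ : A →ₗ[k] B) (hΦ1 : Φ 1 = 1)
    (hΦε : ∀ a : A, Coalgebra.counit (R := k) (Φ a) = Coalgebra.counit (R := k) a)
    (N : Type*) [AddCommGroup N] [Module k N]
    (α : N →ₗ[k] B ⊗[k] N)
    (hαcoassoc : ∀ x : N,
      (LinearMap.lTensor B α) (α x) =
        (TensorProduct.assoc k B B N) ((LinearMap.rTensor N (Coalgebra.comul (R := k))) (α x)))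
    (hαcounit : ∀ x : N,
      (TensorProduct.lid k N) ((LinearMap.rTensor N (Coalgebra.counit (R := k))) (α x)) = x)
    (ζ : A ⊗[k] N)
    -- induction condition: `(id_A ⊗ Φ ⊗ id_N)((Δ_A ⊗ id_N) ζ) = (id_A ⊗ α) ζ`
    (hind : (LinearMap.rTensor N (LinearMap.lTensor A Φ))
        ((LinearMap.rTensor N (Coalgebra.comul (R := k))) ζ) =
      (TensorProduct.assoc k A B N).symm ((LinearMap.lTensor A α) ζ))
    -- invariance condition: `(Δ_A ⊗ id_N) ζ = 1_A ⊗ ζ`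
    (hinv : (LinearMap.rTensor N (Coalgebra.comul (R := k))) ζ =
      (TensorProduct.assoc k A A N).symm ((1 : A) ⊗ₜ[k] ζ)) :
    ζ = (1 : A) ⊗ₜ[k]
        ((TensorProduct.lid k N) ((LinearMap.rTensor N (Coalgebra.counit (R := k))) ζ)) ∧
    α ((TensorProduct.lid k N) ((LinearMap.rTensor N (Coalgebra.counit (R := k))) ζ)) =
      (1 : B) ⊗ₜ[k]
        ((TensorProduct.lid k N) ((LinearMap.rTensor N (Coalgebra.counit (R := k))) ζ)) := by
  haveI : Nontrivial A := nontrivial_of_ne 1 0 hA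
  set ν : N := (TensorProduct.lid k N) ((LinearMap.rTensor N (Coalgebra.counit (R := k))) ζ)
    with hν
  -- the map A ⊗ A → A applying ε to the second factor
  set g : A ⊗[k] A →ₗ[k] A :=
    (TensorProduct.rid k A).toLinearMap ∘ₗ LinearMap.lTensor A (Coalgebra.counit (R := k))
    with hg
  have hgcomul : ∀ a : A, g (Coalgebra.comul (R := k) a) = a := by
    intro a
    simp [hg, Coalgebra.lTensor_counit_comul]
  -- first claim
  have hP : (LinearMap.rTensor N g) ∘ₗ
      ((TensorProduct.assoc k A A N).symm.toLinearMap ∘ₗ TensorProduct.mk k A (A ⊗[k] N) 1) =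
      (TensorProduct.mk k A N 1) ∘ₗ
        ((TensorProduct.lid k N).toLinearMap ∘ₗ
          LinearMap.rTensor N (Coalgebra.counit (R := k))) := by
    apply TensorProduct.ext'
    intro a n
    simp only [hg, LinearMap.coe_comp, Function.comp_apply, TensorProduct.mk_apply,
      LinearEquiv.coe_coe, TensorProduct.assoc_symm_tmul, LinearMap.rTensor_tmul,
      LinearMap.lTensor_tmul, TensorProduct.rid_tmul, TensorProduct.lid_tmul]
    exact TensorProduct.smul_tmul _ _ _
  have h1 : ζ = (1 : A) ⊗ₜ[k] ν := by
    have h0 : (LinearMap.rTensor N g) ((LinearMap.rTensor N (Coalgebra.comul (R := k))) ζ) = ζ := by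
      rw [← LinearMap.rTensor_comp_apply]
      have : g ∘ₗ Coalgebra.comul (R := k) = LinearMap.id := by
        ext a; exact hgcomul a
      rw [this, LinearMap.rTensor_id, LinearMap.id_apply]
    have h2 := congrArg (LinearMap.rTensor N g) hinv
    rw [h0] at h2
    have h3 := LinearMap.congr_fun hP ζ
    simp only [LinearMap.coe_comp, Function.comp_apply, LinearEquiv.coe_coe,
      TensorProduct.mk_apply] at h3
    rw [h2, h3, hν]
  refine ⟨h1, ?_⟩
  -- second claim: substitute ζ = 1 ⊗ ν into hind
  rw [h1] at hind
  have hL : (LinearMap.rTensor N (Coalgebra.comul (R := k))) ((1 : A) ⊗ₜ[k] ν) =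
      ((1 : A) ⊗ₜ[k] (1 : A)) ⊗ₜ[k] ν := by
    simp [LinearMap.rTensor_tmul, Bialgebra.comul_one, Algebra.TensorProduct.one_def]
  rw [hL] at hind
  have hL2 : (LinearMap.rTensor N (LinearMap.lTensor A Φ))
      (((1 : A) ⊗ₜ[k] (1 : A)) ⊗ₜ[k] ν) = ((1 : A) ⊗ₜ[k] (1 : B)) ⊗ₜ[k] ν := by
    simp [hΦ1]
  rw [hL2, LinearMap.lTensor_tmul] at hind
  -- apply assoc to both sides
  have h4 : (1 : A) ⊗ₜ[k] ((1 : B) ⊗ₜ[k] ν) = (1 : A) ⊗ₜ[k] (α ν) := by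
    have := congrArg (TensorProduct.assoc k A B N) hind
    simpa using this
  -- cancel 1_A ⊗ –
  have hinj : Function.Injective ((Algebra.linearMap k A).rTensor (B ⊗[k] N)) :=
    Module.Flat.rTensor_preserves_injective_linearMap _ (algebraMap k A).injective
  have key : ∀ x : B ⊗[k] N,
      ((Algebra.linearMap k A).rTensor (B ⊗[k] N)) ((1 : k) ⊗ₜ[k] x) = (1 : A) ⊗ₜ[k] x := by
    intro x; simp
  have h6 : (1 : k) ⊗ₜ[k] ((1 : B) ⊗ₜ[k] ν) = (1 : k) ⊗ₜ[k] (α ν) :=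
    hinj (by rw [key, key]; exact h4)
  have h5 := congrArg (TensorProduct.lid k (B ⊗[k] N)) h6
  simpa using h5.symm
end
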